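/- arXiv:1807.03088 — 4 statements merged into one kernel-verified Lean document; each statement's English description precedes it below -/
import Mathlib

section
/- Let a be an element of p·D_k^{(p)} = {p·x mod p² : x ∈ D_k^{(p)}} ⊆ Z_{p²}. Then for every i, the set a·D_i^{(p²)} (mod p²) = {a·x mod p² : x ∈ D_i^{(p²)}} equals p·D_{(i+k) mod f}^{(p)} = {p·y mod p² : y ∈ D_{(i+k) mod f}^{(p)}}. -/
open Finset Polynomial

/-- Generalized cyclotomic class `D_i^{(p)} = {g^(f·t+i) mod p : 0 ≤ t < e}`. -/
def Dp (p e f g i : ℕ) : Finset ℕ :=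
  (Finset.range e).image fun t => g ^ (f * t + i) % p

/-- Generalized cyclotomic class `D_i^{(p²)} = {g^(p·f·t+i) mod p² : 0 ≤ t < e}`. -/
def Dp2 (p e f g i : ℕ) : Finset ℕ :=
  (Finset.range e).image fun t => g ^ (p * f * t + i) % p ^ 2

/-- `p·D_i^{(p)} = {p·x mod p² : x ∈ D_i^{(p)}} ⊆ Z_{p²}`. -/
def pDp (p e f g i : ℕ) : Finset ℕ :=
  (Dp p e f g i).image fun x => p * x % p ^ 2

/-- `H_b^{(p)} = ⋃_{i=0}^{f/2-1} p·D_{(i+b) mod f}^{(p)}`. -/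
def Hp (p e f g b : ℕ) : Finset ℕ :=
  (Finset.range (f / 2)).biUnion fun i => pDp p e f g ((i + b) % f)

/-- `H_b^{(p²)} = ⋃_{i=0}^{pf/2-1} D_{(i+b) mod pf}^{(p²)}`. -/
def Hp2 (p e f g b : ℕ) : Finset ℕ :=
  (Finset.range (p * f / 2)).biUnion fun i => Dp2 p e f g ((i + b) % (p * f))

/-- The characteristic set `C₁ = H_b^{(p)} ∪ H_b^{(p²)} ∪ {0}`. -/
def C1 (p e f g b : ℕ) : Finset ℕ :=
  Hp p e f g b ∪ Hp2 p e f g b ∪ {0}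

open Finset Polynomial

/-- If exponents agree mod `p-1` and `g^(p-1) ≡ 1`, the powers agree mod `p`. -/
lemma pow_mod_congr_aux (p g : ℕ) (hg1 : (g : ZMod p) ^ (p - 1) = 1) {x y : ℕ}
    (h : x % (p - 1) = y % (p - 1)) : g ^ x % p = g ^ y % p := by
  have key : (g : ZMod p) ^ x = (g : ZMod p) ^ y := by
    conv_lhs => rw [← Nat.div_add_mod x (p - 1)]
    conv_rhs => rw [← Nat.div_add_mod y (p - 1)]
    rw [pow_add, pow_add, pow_mul, pow_mul, hg1, one_pow, one_pow, h]
  have := (ZMod.natCast_eq_natCast_iff' (g ^ x) (g ^ y) p).mp (by push_cast; exact key)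
  exact this

lemma sigma_image (e c p : ℕ) (he : 0 < e) (hcop : Nat.gcd e p = 1) :
    (Finset.range e).image (fun t => (c + p * t) % e) = Finset.range e := by
  apply Finset.eq_of_subset_of_card_le
  · intro y hy
    simp only [Finset.mem_image, Finset.mem_range] at hy ⊢
    obtain ⟨t, _, rfl⟩ := hy
    exact Nat.mod_lt _ he
  · rw [Finset.card_image_of_injOn, Finset.card_range]
    intro t1 h1 t2 h2 h
    simp only [Finset.coe_range, Set.mem_Iio] at h1 h2
    have hm : p * t1 ≡ p * t2 [MOD e] := by
      have hc : c + p * t1 ≡ c + p * t2 [MOD e] := h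
      exact (Nat.ModEq.add_left_cancel' c hc)
    have := Nat.ModEq.cancel_left_of_coprime hcop hm
    have h3 : t1 % e = t2 % e := this
    rwa [Nat.mod_eq_of_lt h1, Nat.mod_eq_of_lt h2] at h3

theorem stmt_4 (p e f r g : ℕ) (hp : p.Prime) (hodd : Odd p)
    (hr : 1 ≤ r) (hf : f = 2 ^ r) (hef : p - 1 = e * f)
    (hg : orderOf (g : ZMod (p ^ 2)) = p * (p - 1))
    (k a : ℕ) (ha : a ∈ pDp p e f g k) :
    ∀ i : ℕ, (Dp2 p e f g i).image (fun x => a * x % p ^ 2) = pDp p e f g ((i + k) % f) := by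
  haveI : Fact p.Prime := ⟨hp⟩
  have hp3 : 3 ≤ p := by
    have h2 := hp.two_le
    have ho := Nat.odd_iff.mp hodd
    omega
  have hfpos : 0 < f := by rw [hf]; positivity
  have hepos : 0 < e := by
    rcases Nat.eq_zero_or_pos e with h | h
    · rw [h, zero_mul] at hef; omega
    · exact h
  -- g is coprime to p
  have hgu : IsUnit (g : ZMod (p ^ 2)) := by
    have h1 : (g : ZMod (p ^ 2)) ^ (p * (p - 1)) = 1 := by
      rw [← hg]; exact pow_orderOf_eq_one _
    exact IsUnit.of_mul_eq_one ((g : ZMod (p ^ 2)) ^ (p * (p - 1) - 1))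
      (by rw [← pow_succ', show p * (p - 1) - 1 + 1 = p * (p - 1) by have hpos : 0 < p * (p - 1) := Nat.mul_pos (by omega) (by omega); omega]; exact h1)
  haveI : NeZero (p ^ 2) := ⟨by positivity⟩
  have hcop2 : Nat.Coprime g (p ^ 2) := (ZMod.isUnit_iff_coprime g (p ^ 2)).mp hgu
  have hcopgp : Nat.Coprime g p := hcop2.coprime_dvd_right (dvd_pow_self p two_ne_zero)
  have hgz : (g : ZMod p) ≠ 0 := by
    rw [Ne, ZMod.natCast_eq_zero_iff]
    exact (Nat.Prime.coprime_iff_not_dvd hp).mp hcopgp.symm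
  have hg1 : (g : ZMod p) ^ (p - 1) = 1 := ZMod.pow_card_sub_one_eq_one hgz
  -- coprimality of e and p
  have hcopep : Nat.gcd e p = 1 := by
    have : ¬ p ∣ e := by
      intro hdvd
      have := Nat.le_of_dvd hepos hdvd
      have : e ≤ e * f := Nat.le_mul_of_pos_right e hfpos
      omega
    exact (Nat.coprime_comm.mpr ((Nat.Prime.coprime_iff_not_dvd hp).mpr this))
  -- unpack a
  simp only [pDp, Dp, Finset.mem_image, Finset.mem_range] at ha
  obtain ⟨x, ⟨t0, ht0, rfl⟩, rfl⟩ := ha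
  intro i
  set m := (i + k) % f with hm
  set q := (i + k) / f with hq
  have hqm : f * q + m = i + k := Nat.div_add_mod (i + k) f
  -- a in simplified form
  have hmoda : p * (g ^ (f * t0 + k) % p) % p ^ 2 = p * (g ^ (f * t0 + k) % p) := by
    apply Nat.mod_eq_of_lt
    have h1 : g ^ (f * t0 + k) % p < p := Nat.mod_lt _ (by omega)
    calc p * (g ^ (f * t0 + k) % p) < p * p := by
          exact mul_lt_mul_of_pos_left h1 (by omega)
      _ = p ^ 2 := (sq p).symm
  -- pointwise key equality
  have key : ∀ t : ℕ,
      (p * (g ^ (f * t0 + k) % p) % p ^ 2) * (g ^ (p * f * t + i) % p ^ 2) % p ^ 2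
        = p * (g ^ (f * ((t0 + q + p * t) % e) + m) % p) % p ^ 2 := by
    intro t
    rw [hmoda]
    have hsq : p ^ 2 = p * p := sq p
    rw [hsq, mul_assoc, Nat.mul_mod_mul_left, Nat.mul_mod_mul_left]
    congr 1
    have h1 : (g ^ (f * t0 + k) % p) * (g ^ (p * f * t + i) % (p * p)) % p
        = g ^ (f * t0 + k + (p * f * t + i)) % p := by
      rw [Nat.mul_mod, Nat.mod_mod_of_dvd _ (dvd_mul_left p p), Nat.mod_mod_of_dvd,
        ← Nat.mul_mod, ← pow_add]
      exact dvd_refl p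
    rw [h1, Nat.mod_mod_of_dvd _ (dvd_refl p)]
    -- exponent congruence
    apply pow_mod_congr_aux p g hg1
    rw [hef]
    set X := t0 + q + p * t with hX
    have hxeq : f * t0 + k + (p * f * t + i) = f * X + m := by
      have h2 : f * X = f * t0 + f * q + p * f * t := by rw [hX]; ring
      omega
    rw [hxeq]
    have h3 : f * X = (e * f) * (X / e) + f * (X % e) := by
      conv_lhs => rw [← Nat.div_add_mod X e]
      ring
    rw [h3, Nat.add_assoc, Nat.mul_add_mod]
  -- assemble
  rw [Dp2, pDp, Dp, Finset.image_image, Finset.image_image]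
  have hLHS : (Finset.range e).image
      ((fun x => p * (g ^ (f * t0 + k) % p) % p ^ 2 * x % p ^ 2) ∘ fun t => g ^ (p * f * t + i) % p ^ 2)
      = (Finset.range e).image
        (((fun x => p * x % p ^ 2) ∘ fun s => g ^ (f * s + m) % p) ∘ fun t => (t0 + q + p * t) % e) := by
    apply Finset.image_congr
    intro t _
    exact key t
  rw [hLHS, ← Finset.image_image, sigma_image e (t0 + q) p hepos hcopep]
end

section
/- If a ∈ p·D_k^{(p)} = {p·x mod p² : x ∈ D_k^{(p)}}, then H_b^{(p)}(β^a) = Σ_{t ∈ H_b^{(p)}} β^{a·t} equals the image of (p−1)/2 in F₂ ⊆ K, that is, it equals 1 if p ≡ 3 (mod 4) and equals 0 if p ≡ 1 (mod 4). -/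
open Finset Polynomial

/-- If `g` has order `p(p-1)` mod `p²`, then `g` has order `p-1` mod `p`. -/
lemma orderOf_mod_p (p g : ℕ) (hp : p.Prime)
    (hg : orderOf (g : ZMod (p ^ 2)) = p * (p - 1)) :
    orderOf (g : ZMod p) = p - 1 := by
  haveI : Fact p.Prime := ⟨hp⟩
  have hp0 : 0 < p := hp.pos
  have hp1 : 1 < p := hp.one_lt
  have hgpow : (g : ZMod (p ^ 2)) ^ (p * (p - 1)) = 1 := by
    rw [← hg]; exact pow_orderOf_eq_one _
  have hgunit : IsUnit (g : ZMod (p ^ 2)) :=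
    IsUnit.of_pow_eq_one hgpow (Nat.mul_ne_zero hp0.ne' (by omega))
  haveI : NeZero (p ^ 2) := ⟨by positivity⟩
  have hcop2 : Nat.Coprime g (p ^ 2) := (ZMod.isUnit_iff_coprime g (p ^ 2)).mp hgunit
  have hcop : Nat.Coprime g p := (Nat.coprime_pow_right_iff (by norm_num) g p).mp hcop2
  have hgp_unit : IsUnit (g : ZMod p) := (ZMod.isUnit_iff_coprime g p).mpr hcop
  have hgne : (g : ZMod p) ≠ 0 := hgp_unit.ne_zero
  set d := orderOf (g : ZMod p) with hd
  have hd_dvd : d ∣ p - 1 :=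
    orderOf_dvd_of_pow_eq_one (ZMod.pow_card_sub_one_eq_one hgne)
  have hped : (p : ℤ) ∣ (g : ℤ) ^ d - 1 := by
    have h1 : (((g : ℤ) ^ d - 1 : ℤ) : ZMod p) = 0 := by
      push_cast
      rw [pow_orderOf_eq_one, sub_self]
    exact (ZMod.intCast_zmod_eq_zero_iff_dvd _ p).mp h1
  have h2 : (p : ℤ) ^ 2 ∣ (g : ℤ) ^ (d * p) - 1 := by
    have := dvd_sub_pow_of_dvd_sub (p := p) (a := (g : ℤ) ^ d) (b := 1) hped 1
    simpa [pow_one, one_pow, ← pow_mul] using this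
  have h3 : (g : ZMod (p ^ 2)) ^ (d * p) = 1 := by
    have h0 : (((g : ℤ) ^ (d * p) - 1 : ℤ) : ZMod (p ^ 2)) = 0 := by
      rw [ZMod.intCast_zmod_eq_zero_iff_dvd]
      exact_mod_cast h2
    push_cast at h0
    exact sub_eq_zero.mp h0
  have h4 : p * (p - 1) ∣ d * p := hg ▸ orderOf_dvd_of_pow_eq_one h3
  have h5 : p - 1 ∣ d := by
    have : p * (p - 1) ∣ p * d := by rwa [mul_comm d p] at h4
    exact (mul_dvd_mul_iff_left hp0.ne').mp this
  exact Nat.dvd_antisymm hd_dvd h5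

theorem stmt_7 (p e f r g : ℕ) (hp : p.Prime) (hodd : Odd p)
    (hr : 1 ≤ r) (hf : f = 2 ^ r) (hef : p - 1 = e * f)
    (hg : orderOf (g : ZMod (p ^ 2)) = p * (p - 1))
    {K : Type*} [Field K] (hK : CharP K 2) (β : K) (hβ : orderOf β = p ^ 2)
    (b k a : ℕ) (ha : a ∈ pDp p e f g k) :
    ∑ t ∈ Hp p e f g b, β ^ (a * t) = (((p - 1) / 2 : ℕ) : K) := by
  classical
  haveI : Fact p.Prime := ⟨hp⟩
  have hp0 : 0 < p := hp.pos
  have hp3 : 3 ≤ p := by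
    rcases hodd with ⟨m, hm⟩
    have := hp.two_le
    omega
  have hfpos : 0 < f := by subst hf; positivity
  have hfeven : 2 ∣ f := by subst hf; exact dvd_pow_self 2 (by omega)
  have hgp : orderOf (g : ZMod p) = p - 1 := orderOf_mod_p p g hp hg
  have hgp_unit : IsUnit (g : ZMod p) := by
    apply IsUnit.of_pow_eq_one (n := p - 1)
    · rw [← hgp]; exact pow_orderOf_eq_one _
    · omega
  -- injectivity of powers of g below p - 1
  have inj : ∀ u v : ℕ, u < p - 1 → v < p - 1 →
      (g : ZMod p) ^ u = (g : ZMod p) ^ v → u = v := by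
    intro u v hu hv h
    set U := hgp_unit.unit with hU
    have hUc : (U : ZMod p) = (g : ZMod p) := hgp_unit.unit_spec
    have hOU : orderOf U = p - 1 := by rw [← orderOf_units, hUc, hgp]
    have hpow : U ^ u = U ^ v := by
      ext
      push_cast [hUc]
      exact h
    have := pow_eq_pow_iff_modEq.mp hpow
    rw [hOU, Nat.ModEq, Nat.mod_eq_of_lt hu, Nat.mod_eq_of_lt hv] at this
    exact this
  -- every member of pDp j is p * (g^(f*t+j) % p), with t < e
  have hmem : ∀ j x, x ∈ pDp p e f g j → ∃ t < e, x = p * (g ^ (f * t + j) % p) := by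
    intro j x hx
    simp only [pDp, Dp, Finset.mem_image, Finset.mem_range] at hx
    obtain ⟨y, ⟨t, ht, rfl⟩, rfl⟩ := hx
    refine ⟨t, ht, ?_⟩
    have hlt : g ^ (f * t + j) % p < p := Nat.mod_lt _ hp0
    have hlt2 : p * (g ^ (f * t + j) % p) < p ^ 2 := by
      rw [sq]; exact Nat.mul_lt_mul_of_le_of_lt (le_refl p) hlt hp0
    exact Nat.mod_eq_of_lt hlt2
  -- exponent bound
  have hexp : ∀ t j, t < e → j < f → f * t + j < p - 1 := by
    intro t j ht hj
    have h1 : f * t + j < f * (t + 1) := by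
      rw [Nat.mul_add, Nat.mul_one]; omega
    have h2 : f * (t + 1) ≤ f * e := Nat.mul_le_mul_left f (by omega)
    have h3 : f * e = p - 1 := by rw [hef, mul_comm]
    omega
  -- collision analysis
  have hcoll : ∀ t1 t2 j1 j2, t1 < e → t2 < e → j1 < f → j2 < f →
      p * (g ^ (f * t1 + j1) % p) = p * (g ^ (f * t2 + j2) % p) →
      t1 = t2 ∧ j1 = j2 := by
    intro t1 t2 j1 j2 ht1 ht2 hj1 hj2 hpp
    have hx : g ^ (f * t1 + j1) % p = g ^ (f * t2 + j2) % p :=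
      Nat.eq_of_mul_eq_mul_left hp0 hpp
    have hz : (g : ZMod p) ^ (f * t1 + j1) = (g : ZMod p) ^ (f * t2 + j2) := by
      have := congrArg (fun n : ℕ => (n : ZMod p)) hx
      simpa [Nat.cast_pow, ZMod.natCast_mod] using this
    have heq := inj _ _ (hexp _ _ ht1 hj1) (hexp _ _ ht2 hj2) hz
    have d1 : (f * t1 + j1) / f = t1 := by
      rw [Nat.mul_add_div hfpos, Nat.div_eq_of_lt hj1]; omega
    have d2 : (f * t2 + j2) / f = t2 := by
      rw [Nat.mul_add_div hfpos, Nat.div_eq_of_lt hj2]; omega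
    have htt : t1 = t2 := by rw [← d1, ← d2, heq]
    subst htt
    exact ⟨rfl, by omega⟩
  -- p divides every element of pDp j
  have hdvd : ∀ j x, x ∈ pDp p e f g j → p ∣ x := by
    intro j x hx
    obtain ⟨t, _, rfl⟩ := hmem j x hx
    exact Dvd.intro _ rfl
  -- each term of the sum is 1
  have hpa : p ∣ a := hdvd k a ha
  have hterm : ∀ t ∈ Hp p e f g b, β ^ (a * t) = 1 := by
    intro t ht
    simp only [Hp, Finset.mem_biUnion, Finset.mem_range] at ht
    obtain ⟨i, hi, hti⟩ := ht
    have hpt : p ∣ t := hdvd _ t hti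
    have h2 : p ^ 2 ∣ a * t := by rw [sq]; exact mul_dvd_mul hpa hpt
    obtain ⟨c, hc⟩ := h2
    rw [hc, pow_mul, ← hβ, pow_orderOf_eq_one, one_pow]
  rw [Finset.sum_congr rfl hterm, Finset.sum_const, nsmul_eq_mul, mul_one]
  -- now compute the cardinality
  congr 1
  -- card of each pDp is e
  have hcardD : ∀ j, j < f → (pDp p e f g j).card = e := by
    intro j hj
    have : pDp p e f g j =
        (Finset.range e).image fun t => p * (g ^ (f * t + j) % p) := by
      apply Finset.ext
      intro x
      simp only [Finset.mem_image, Finset.mem_range]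
      constructor
      · intro hx
        obtain ⟨t, ht, rfl⟩ := hmem j x hx
        exact ⟨t, ht, rfl⟩
      · rintro ⟨t, ht, rfl⟩
        simp only [pDp, Dp, Finset.mem_image, Finset.mem_range]
        refine ⟨g ^ (f * t + j) % p, ⟨t, ht, rfl⟩, ?_⟩
        have hlt : g ^ (f * t + j) % p < p := Nat.mod_lt _ hp0
        have hlt2 : p * (g ^ (f * t + j) % p) < p ^ 2 := by
          rw [sq]; exact Nat.mul_lt_mul_of_le_of_lt (le_refl p) hlt hp0
        exact Nat.mod_eq_of_lt hlt2
    rw [this, Finset.card_image_of_injOn, Finset.card_range]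
    intro t1 h1 t2 h2 hx
    simp only [Finset.mem_coe, Finset.mem_range] at h1 h2
    exact (hcoll t1 t2 j j h1 h2 hj hj hx).1
  -- disjointness
  have hdisj : ∀ j1 j2, j1 < f → j2 < f → j1 ≠ j2 →
      Disjoint (pDp p e f g j1) (pDp p e f g j2) := by
    intro j1 j2 hj1 hj2 hne
    rw [Finset.disjoint_left]
    intro x hx1 hx2
    obtain ⟨t1, ht1, he1⟩ := hmem j1 x hx1
    obtain ⟨t2, ht2, he2⟩ := hmem j2 x hx2
    exact hne (hcoll t1 t2 j1 j2 ht1 ht2 hj1 hj2 (by rw [← he1, ← he2])).2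
  have hcard : (Hp p e f g b).card = f / 2 * e := by
    rw [Hp, Finset.card_biUnion]
    · rw [Finset.sum_congr rfl fun i _ => hcardD _ (Nat.mod_lt _ hfpos),
        Finset.sum_const, Finset.card_range, smul_eq_mul]
    · intro i1 h1 i2 h2 hne
      simp only [Finset.coe_range, Set.mem_Iio] at h1 h2
      apply hdisj _ _ (Nat.mod_lt _ hfpos) (Nat.mod_lt _ hfpos)
      intro hjeq
      apply hne
      have : (i1 + b) % f = (i2 + b) % f := hjeq
      have h3 : i1 % f = i2 % f := Nat.ModEq.add_right_cancel' b this
      have hflt : f / 2 ≤ f := Nat.div_le_self f 2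
      rw [Nat.mod_eq_of_lt (by omega), Nat.mod_eq_of_lt (by omega)] at h3
      exact h3
  rw [hcard, hef]
  rw [Nat.mul_div_assoc e hfeven]
  ring
end

section
/- For any integer v with 0 ≤ v ≤ f−1, the value H_v^{(p)}(β) lies in the prime subfield {0,1} of K if and only if 2 ∈ D_0^{(p)}. -/
open Finset Polynomial

section Aux

variable {p e f g : ℕ}

lemma natcast_inj_lt {x y : ℕ} (hp : 0 < p) (hx : x < p) (hy : y < p)
    (h : (x : ZMod p) = (y : ZMod p)) : x = y := by
  haveI : NeZero p := ⟨hp.ne'⟩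
  have := congrArg ZMod.val h
  rwa [ZMod.val_cast_of_lt hx, ZMod.val_cast_of_lt hy] at this

lemma mem_Dp_iff (hp : 0 < p) (he : 0 < e) (hf : 0 < f)
    (hgpow : ∀ a b : ℕ, (g : ZMod p) ^ a = (g : ZMod p) ^ b ↔ a ≡ b [MOD e * f])
    {x i : ℕ} :
    x ∈ Dp p e f g i ↔ x < p ∧ ∃ a : ℕ, a % f = i % f ∧ (x : ZMod p) = (g : ZMod p) ^ a := by
  constructor
  · intro hx
    rw [Dp, Finset.mem_image] at hx
    obtain ⟨t, _, rfl⟩ := hx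
    refine ⟨Nat.mod_lt _ hp, f * t + i, by rw [Nat.mul_add_mod], ?_⟩
    rw [ZMod.natCast_mod]
    push_cast
    ring
  · rintro ⟨hxp, a, ha, hxa⟩
    set A := a + f * (e * (i + 1)) with hAdef
    have hAf : A % f = i % f := by rw [hAdef, Nat.add_mul_mod_self_left, ha]
    have hiA : i ≤ A := by
      have h1 : i + 1 ≤ e * (i + 1) := Nat.le_mul_of_pos_left _ he
      have h2 : e * (i + 1) ≤ f * (e * (i + 1)) := Nat.le_mul_of_pos_left _ hf
      omega
    have hAa : A ≡ a [MOD e * f] := by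
      show A % (e * f) = a % (e * f)
      rw [hAdef]
      have : a + f * (e * (i + 1)) = a + (e * f) * (i + 1) := by ring
      rw [this, Nat.add_mul_mod_self_left]
    have hfdvd : f ∣ A - i := by
      have := Nat.sub_mod_eq_zero_of_mod_eq hAf
      exact Nat.dvd_of_mod_eq_zero this
    set t0 := (A - i) / f with ht0
    have hAt0 : f * t0 + i = A := by
      rw [ht0, Nat.mul_div_cancel' hfdvd]
      omega
    set t := t0 % e with htdef
    have ht : t < e := Nat.mod_lt _ he
    have hmod : f * t + i ≡ A [MOD e * f] := by
      show (f * t + i) % (e * f) = A % (e * f)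
      have hd : t0 = e * (t0 / e) + t := (Nat.div_add_mod t0 e).symm
      have : A = (f * t + i) + (e * f) * (t0 / e) := by
        rw [← hAt0]; nth_rewrite 1 [hd]; ring
      rw [this, Nat.add_mul_mod_self_left]
    have hpow : (g : ZMod p) ^ (f * t + i) = (g : ZMod p) ^ a :=
      (hgpow _ _).2 (hmod.trans hAa)
    have hxeq : x = g ^ (f * t + i) % p := by
      refine natcast_inj_lt hp hxp (Nat.mod_lt _ hp) ?_
      rw [ZMod.natCast_mod]
      push_cast
      rw [← hpow] at hxa
      exact hxa
    rw [Dp, Finset.mem_image]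
    exact ⟨t, Finset.mem_range.2 ht, hxeq.symm⟩

lemma Dp_eq_of_mod (hp : 0 < p) (he : 0 < e) (hf : 0 < f)
    (hgpow : ∀ a b : ℕ, (g : ZMod p) ^ a = (g : ZMod p) ^ b ↔ a ≡ b [MOD e * f])
    {i j : ℕ} (h : i % f = j % f) : Dp p e f g i = Dp p e f g j := by
  ext x
  rw [mem_Dp_iff hp he hf hgpow, mem_Dp_iff hp he hf hgpow, h]

lemma Dp_disjoint (hp : 0 < p) (he : 0 < e) (hf : 0 < f)
    (hgpow : ∀ a b : ℕ, (g : ZMod p) ^ a = (g : ZMod p) ^ b ↔ a ≡ b [MOD e * f])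
    {i j : ℕ} (h : i % f ≠ j % f) : Disjoint (Dp p e f g i) (Dp p e f g j) := by
  rw [Finset.disjoint_left]
  intro x hxi hxj
  rw [mem_Dp_iff hp he hf hgpow] at hxi hxj
  obtain ⟨-, a, ha, hxa⟩ := hxi
  obtain ⟨-, b, hb, hxb⟩ := hxj
  have hab : a ≡ b [MOD e * f] := (hgpow a b).1 (hxa ▸ hxb)
  have : a ≡ b [MOD f] := Nat.ModEq.of_dvd (dvd_mul_left f e) hab
  exact h (ha ▸ hb ▸ this)

lemma card_Dp (hp : 0 < p) (he : 0 < e) (hf : 0 < f)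
    (hgpow : ∀ a b : ℕ, (g : ZMod p) ^ a = (g : ZMod p) ^ b ↔ a ≡ b [MOD e * f])
    (i : ℕ) : (Dp p e f g i).card = e := by
  rw [Dp, Finset.card_image_of_injOn, Finset.card_range]
  intro t ht u hu htu
  simp only [Finset.coe_range, Set.mem_Iio] at ht hu
  dsimp only at htu
  have hc : ((g ^ (f * t + i) % p : ℕ) : ZMod p) = ((g ^ (f * u + i) % p : ℕ) : ZMod p) := by
    rw [htu]
  rw [ZMod.natCast_mod, ZMod.natCast_mod] at hc
  push_cast at hc
  have hmod : f * t + i ≡ f * u + i [MOD e * f] := (hgpow _ _).1 hc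
  have h2 : f * t ≡ f * u [MOD e * f] := Nat.ModEq.add_right_cancel' i hmod
  rw [mul_comm e f] at h2
  have h3 : t ≡ u [MOD e] := Nat.ModEq.mul_left_cancel' hf.ne' h2
  rw [Nat.ModEq] at h3
  rwa [Nat.mod_eq_of_lt ht, Nat.mod_eq_of_lt hu] at h3

lemma image_two_mul_Dp (hpp : p.Prime) (hp : 2 < p) (he : 0 < e) (hf : 0 < f)
    (hgpow : ∀ a b : ℕ, (g : ZMod p) ^ a = (g : ZMod p) ^ b ↔ a ≡ b [MOD e * f])
    {k : ℕ} (hk : ((2 : ℕ) : ZMod p) = (g : ZMod p) ^ k) (i : ℕ) :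
    (Dp p e f g i).image (fun x => 2 * x % p) = Dp p e f g (i + k) := by
  haveI : Fact p.Prime := ⟨hpp⟩
  have hp0 : 0 < p := by omega
  have h2ne : ((2 : ℕ) : ZMod p) ≠ 0 := by
    intro h
    have h1 := (ZMod.natCast_eq_zero_iff 2 p).1 h
    have := Nat.le_of_dvd (by norm_num) h1
    omega
  apply Finset.eq_of_subset_of_card_le
  · intro y hy
    simp only [Finset.mem_image] at hy
    obtain ⟨x, hx, rfl⟩ := hy
    rw [mem_Dp_iff hp0 he hf hgpow] at hx ⊢
    obtain ⟨hxp, a, ha, hxa⟩ := hx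
    refine ⟨Nat.mod_lt _ hp0, a + k, Nat.ModEq.add_right k ha, ?_⟩
    rw [ZMod.natCast_mod]
    push_cast
    rw [hxa, pow_add, ← hk]
    push_cast
    ring
  · rw [card_Dp hp0 he hf hgpow, Finset.card_image_of_injOn, card_Dp hp0 he hf hgpow]
    intro x hx y hy hxy
    dsimp only at hxy
    rw [Finset.mem_coe, mem_Dp_iff hp0 he hf hgpow] at hx hy
    have hcx : ((2 * x % p : ℕ) : ZMod p) = ((2 * y % p : ℕ) : ZMod p) := by rw [hxy]
    rw [ZMod.natCast_mod, ZMod.natCast_mod] at hcx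
    push_cast at hcx
    have hc2 : ((2 : ℕ) : ZMod p) * (x : ZMod p) = ((2 : ℕ) : ZMod p) * (y : ZMod p) := by
      push_cast
      exact hcx
    exact natcast_inj_lt hp0 hx.1 hy.1 (mul_left_cancel₀ h2ne hc2)

lemma biUnion_Dp_eq (hpp : p.Prime) (he : 0 < e) (hf : 0 < f) (hef : p - 1 = e * f)
    (hgpow : ∀ a b : ℕ, (g : ZMod p) ^ a = (g : ZMod p) ^ b ↔ a ≡ b [MOD e * f]) :
    (Finset.range f).biUnion (fun j => Dp p e f g j) = Finset.Ioo 0 p := by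
  haveI : Fact p.Prime := ⟨hpp⟩
  have hp : 0 < p := hpp.pos
  have hg1 : (g : ZMod p) ^ (e * f) = 1 := by
    have h0 := (hgpow (e * f) 0).2 (Nat.modEq_zero_iff_dvd.2 dvd_rfl)
    rwa [pow_zero] at h0
  have hgne : (g : ZMod p) ≠ 0 := by
    intro h
    rw [h, zero_pow (by positivity)] at hg1
    exact zero_ne_one hg1
  ext x
  simp only [Finset.mem_biUnion, Finset.mem_range, Finset.mem_Ioo]
  constructor
  · rintro ⟨j, hj, hx⟩
    rw [mem_Dp_iff hp he hf hgpow] at hx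
    obtain ⟨hxp, a, -, hxa⟩ := hx
    refine ⟨?_, hxp⟩
    rcases Nat.eq_zero_or_pos x with h | h
    · exfalso
      rw [h] at hxa
      simp only [Nat.cast_zero] at hxa
      exact pow_ne_zero a hgne hxa.symm
    · exact h
  · rintro ⟨hx0, hxp⟩
    classical
    set P := (Finset.range (e * f)).image (fun a => (g : ZMod p) ^ a) with hP
    have hinj : Set.InjOn (fun a => (g : ZMod p) ^ a) (Finset.range (e * f)) := by
      intro a ha b hb hab
      rw [Finset.coe_range, Set.mem_Iio] at ha hb
      dsimp only at hab
      have h1 := (hgpow a b).1 hab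
      rwa [Nat.ModEq, Nat.mod_eq_of_lt ha, Nat.mod_eq_of_lt hb] at h1
    have hcardP : P.card = e * f := by
      rw [hP, Finset.card_image_of_injOn hinj, Finset.card_range]
    have hsub : P ⊆ Finset.univ \ {0} := by
      intro z hz
      rw [hP, Finset.mem_image] at hz
      obtain ⟨a, -, rfl⟩ := hz
      simp [Finset.mem_sdiff, pow_ne_zero a hgne]
    have hcardU : (Finset.univ \ ({0} : Finset (ZMod p))).card = p - 1 := by
      rw [Finset.card_sdiff_of_subset (by simp), Finset.card_singleton, Finset.card_univ, ZMod.card]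
    have hPeq : P = Finset.univ \ {0} :=
      Finset.eq_of_subset_of_card_le hsub (by rw [hcardU, hcardP, hef])
    have hxP : (x : ZMod p) ∈ P := by
      rw [hPeq]
      simp only [Finset.mem_sdiff, Finset.mem_univ, true_and, Finset.mem_singleton]
      intro h
      have hdvd := (ZMod.natCast_eq_zero_iff x p).1 h
      have := Nat.le_of_dvd hx0 hdvd
      omega
    rw [hP, Finset.mem_image] at hxP
    obtain ⟨a, ha, hax⟩ := hxP
    refine ⟨a % f, Nat.mod_lt _ hf, ?_⟩
    rw [mem_Dp_iff hp he hf hgpow]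
    exact ⟨hxp, a, (Nat.mod_mod_of_dvd a dvd_rfl).symm, hax.symm⟩

lemma sum_shift {M : Type*} [AddCommGroup M] (h : ℕ → M) (n : ℕ)
    (hper : ∀ m, h (m + n) = h m) :
    ∀ b, ∑ i ∈ Finset.range n, h (i + b) = ∑ i ∈ Finset.range n, h i := by
  intro b
  induction b with
  | zero => simp
  | succ b ih =>
    have key : ∑ i ∈ Finset.range n, h (i + 1 + b) = ∑ i ∈ Finset.range n, h (i + b) := by
      have h1 := Finset.sum_range_succ' (fun i => h (i + b)) n
      have h2 := Finset.sum_range_succ (fun i => h (i + b)) n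
      have h3 : h (n + b) = h (0 + b) := by
        rw [zero_add, add_comm n b, hper b]
      rw [h2, h3] at h1
      -- h1 : ∑ h(i+b) + h(0+b) = ∑ h(i+1+b) + h(0+b)
      exact add_right_cancel h1.symm
    calc ∑ i ∈ Finset.range n, h (i + (b + 1))
        = ∑ i ∈ Finset.range n, h (i + 1 + b) := by
          apply Finset.sum_congr rfl
          intro i _
          congr 1
          omega
      _ = ∑ i ∈ Finset.range n, h (i + b) := key
      _ = ∑ i ∈ Finset.range n, h i := ih

lemma exists_mul_mod_half {f r k : ℕ} (hr : 1 ≤ r) (hf : f = 2 ^ r) (hk : k % f ≠ 0) :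
    ∃ j : ℕ, j * k ≡ f / 2 [MOD f] := by
  have hf0 : 0 < f := by rw [hf]; positivity
  set m := k % f with hm
  have hm0 : m ≠ 0 := hk
  have hmf : m < f := Nat.mod_lt _ hf0
  set s := m.factorization 2 with hs
  set u := m / 2 ^ s with hu
  have hmu : 2 ^ s * u = m := Nat.ordProj_mul_ordCompl_eq_self m 2
  have hu2 : Nat.Coprime 2 u := Nat.coprime_ordCompl Nat.prime_two hm0
  have hsr : s < r := by
    have h1 : 2 ^ s ≤ m := Nat.le_of_dvd (Nat.pos_of_ne_zero hm0) (Dvd.intro u hmu)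
    by_contra h
    push_neg at h
    have : f ≤ 2 ^ s := by rw [hf]; exact Nat.pow_le_pow_right (by norm_num) h
    omega
  have hcop : Nat.Coprime u f := by
    rw [hf]
    exact (hu2.symm).pow_right r
  have heuler : u ^ Nat.totient f ≡ 1 [MOD f] := Nat.ModEq.pow_totient hcop
  have hφ : 1 ≤ Nat.totient f := Nat.totient_pos.2 hf0
  refine ⟨2 ^ (r - 1 - s) * u ^ (Nat.totient f - 1), ?_⟩
  have key : 2 ^ (r - 1 - s) * u ^ (Nat.totient f - 1) * m
      = 2 ^ (r - 1) * u ^ Nat.totient f := by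
    rw [← hmu]
    have h1 : 2 ^ (r - 1 - s) * 2 ^ s = 2 ^ (r - 1) := by
      rw [← pow_add]
      congr 1
      omega
    have h2 : u ^ (Nat.totient f - 1) * u = u ^ Nat.totient f := by
      rw [← pow_succ]
      congr 1
      omega
    calc 2 ^ (r - 1 - s) * u ^ (Nat.totient f - 1) * (2 ^ s * u)
        = (2 ^ (r - 1 - s) * 2 ^ s) * (u ^ (Nat.totient f - 1) * u) := by ring
      _ = 2 ^ (r - 1) * u ^ Nat.totient f := by rw [h1, h2]
  have hf2 : f / 2 = 2 ^ (r - 1) := by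
    rw [hf]
    have : 2 ^ r = 2 * 2 ^ (r - 1) := by
      rw [← pow_succ']
      congr 1
      omega
    rw [this, Nat.mul_div_cancel_left _ (by norm_num)]
  calc 2 ^ (r - 1 - s) * u ^ (Nat.totient f - 1) * k
      ≡ 2 ^ (r - 1 - s) * u ^ (Nat.totient f - 1) * m [MOD f] :=
        Nat.ModEq.mul_left _ ((Nat.mod_modEq k f).symm)
    _ = 2 ^ (r - 1) * u ^ Nat.totient f := key
    _ ≡ 2 ^ (r - 1) * 1 [MOD f] := Nat.ModEq.mul_left _ heuler
    _ = f / 2 := by rw [mul_one, hf2]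


end Aux


theorem stmt_12 (p e f r g : ℕ) (hp : p.Prime) (hodd : Odd p)
    (hr : 1 ≤ r) (hf : f = 2 ^ r) (hef : p - 1 = e * f)
    (hg : orderOf (g : ZMod (p ^ 2)) = p * (p - 1))
    {K : Type*} [Field K] (hK : CharP K 2) (β : K) (hβ : orderOf β = p ^ 2)
    (v : ℕ) (hv : v < f) :
    (∑ t ∈ Hp p e f g v, β ^ t) ∈ ({0, 1} : Set K) ↔ 2 ∈ Dp p e f g 0 := by
  haveI : Fact p.Prime := ⟨hp⟩
  haveI := hK
  have hp0 : 0 < p := hp.pos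
  have hp2 : 2 < p := by
    have h2 := hp.two_le
    rcases Nat.lt_or_ge 2 p with h | h
    · exact h
    · exfalso
      have : p = 2 := by omega
      rw [this] at hodd
      exact (Nat.not_odd_iff_even.2 (by norm_num)) hodd
  have hf0 : 0 < f := by rw [hf]; positivity
  have he0 : 0 < e := by
    rcases Nat.eq_zero_or_pos e with h | h
    · exfalso; rw [h, zero_mul] at hef; omega
    · exact h
  -- order of g mod p is p - 1 = e * f
  have hgpp : (g : ZMod (p ^ 2)) ^ (p * (p - 1)) = 1 := by
    rw [← hg]; exact pow_orderOf_eq_one _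
  have hcast : (ZMod.castHom (dvd_pow_self p two_ne_zero) (ZMod p))
      ((g : ZMod (p ^ 2))) = (g : ZMod p) := map_natCast _ g
  have hg1p : (g : ZMod p) ^ (p * (p - 1)) = 1 := by
    have h := congrArg (ZMod.castHom (dvd_pow_self p two_ne_zero) (ZMod p)) hgpp
    rw [map_pow, map_one, hcast] at h
    exact h
  have hgne : (g : ZMod p) ≠ 0 := by
    intro h
    rw [h, zero_pow (Nat.mul_ne_zero (by omega) (by omega))] at hg1p
    exact zero_ne_one hg1p
  have hdvd2 : orderOf (g : ZMod p) ∣ p - 1 :=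
    orderOf_dvd_of_pow_eq_one (ZMod.pow_card_sub_one_eq_one hgne)
  have hdvd3 : p - 1 ∣ orderOf (g : ZMod p) := by
    set d := orderOf (g : ZMod p) with hd
    have hgd : (g : ZMod p) ^ d = 1 := pow_orderOf_eq_one _
    have hint : (p : ℤ) ∣ (g : ℤ) ^ d - 1 := by
      rw [← ZMod.intCast_zmod_eq_zero_iff_dvd]
      push_cast
      rw [hgd]
      ring
    have h2 : ((p : ℤ)) ^ 2 ∣ ((g : ℤ) ^ d) ^ p - 1 := by
      have h := dvd_sub_pow_of_dvd_sub (R := ℤ) (p := p) (a := (g : ℤ) ^ d) (b := 1) hint 1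
      simpa using h
    have h3 : (g : ZMod (p ^ 2)) ^ (d * p) = 1 := by
      have h := (ZMod.intCast_zmod_eq_zero_iff_dvd (((g : ℤ) ^ d) ^ p - 1) (p ^ 2)).2 (by
        push_cast
        exact h2)
      push_cast at h
      rw [sub_eq_zero] at h
      rw [pow_mul]
      exact_mod_cast h
    have h4 : p * (p - 1) ∣ d * p := by
      rw [← hg]
      exact orderOf_dvd_of_pow_eq_one h3
    rw [mul_comm d p] at h4
    exact (Nat.mul_dvd_mul_iff_left hp0).1 h4
  have hordef : orderOf (g : ZMod p) = e * f := by
    rw [Nat.dvd_antisymm hdvd2 hdvd3, hef]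
  -- the power criterion
  have hgisu : IsUnit (g : ZMod p) := isUnit_iff_ne_zero.2 hgne
  obtain ⟨gu, hgu⟩ := hgisu
  have hgu_ord : orderOf gu = e * f := by
    rw [← hordef, ← hgu, orderOf_units]
  have hgpow : ∀ a b : ℕ, (g : ZMod p) ^ a = (g : ZMod p) ^ b ↔ a ≡ b [MOD e * f] := by
    intro a b
    rw [← hgu_ord, ← pow_eq_pow_iff_modEq]
    constructor
    · intro h
      exact Units.ext (by rw [Units.val_pow_eq_pow_val, Units.val_pow_eq_pow_val, hgu]; exact h)
    · intro h
      rw [← hgu, ← Units.val_pow_eq_pow_val, ← Units.val_pow_eq_pow_val, h]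
  -- the p-th root of unity γ
  set γ : K := β ^ p with hγ
  have hβp2 : β ^ (p ^ 2) = 1 := by rw [← hβ]; exact pow_orderOf_eq_one _
  have hγp : γ ^ p = 1 := by rw [hγ, ← pow_mul, ← pow_two]; exact hβp2
  have hγne : γ ≠ 1 := by
    intro h
    have h1 : β ^ p = 1 := h
    have h2 : orderOf β ∣ p := orderOf_dvd_of_pow_eq_one h1
    rw [hβ] at h2
    have h3 := Nat.le_of_dvd hp0 h2
    nlinarith
  have hγmod : ∀ x : ℕ, γ ^ (x % p) = γ ^ x := by
    intro x
    conv_rhs => rw [← Nat.div_add_mod x p, pow_add, pow_mul, hγp, one_pow, one_mul]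
  have hβmod : ∀ x : ℕ, β ^ (x % p ^ 2) = β ^ x := by
    intro x
    conv_rhs => rw [← Nat.div_add_mod x (p ^ 2), pow_add, pow_mul, hβp2, one_pow, one_mul]
  -- geometric sums
  have hgeom : ∑ x ∈ Finset.range p, γ ^ x = 0 := by
    rw [geom_sum_eq hγne, hγp, sub_self, zero_div]
  have hneg : (-1 : K) = 1 := by
    have h2 : (2 : K) = 0 := by
      have := CharP.cast_eq_zero K 2
      exact_mod_cast this
    linear_combination (-1 : K) * h2
  have hIoo : ∑ x ∈ Finset.Ioo 0 p, γ ^ x = 1 := by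
    have hsplit : Finset.range p = insert 0 (Finset.Ioo 0 p) := by
      ext x
      simp only [Finset.mem_range, Finset.mem_insert, Finset.mem_Ioo]
      omega
    rw [hsplit, Finset.sum_insert (by simp)] at hgeom
    rw [pow_zero] at hgeom
    have : ∑ x ∈ Finset.Ioo 0 p, γ ^ x = -1 := by linear_combination hgeom
    rw [this, hneg]
  -- class sums
  set c : ℕ → K := fun j => ∑ x ∈ Dp p e f g ((j : ℕ) % f), γ ^ x with hc
  have hcper : ∀ m, c (m + f) = c m := by
    intro m
    simp only [hc, Nat.add_mod_right]
  set T : ℕ → K := fun b => ∑ i ∈ Finset.range (f / 2), c (i + b) with hT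
  set U : ℕ → Finset ℕ := fun b =>
    (Finset.range (f / 2)).biUnion fun i => Dp p e f g ((i + b) % f) with hU
  have hUlt : ∀ b x, x ∈ U b → x < p := by
    intro b x hx
    rw [hU, Finset.mem_biUnion] at hx
    obtain ⟨i, -, hx⟩ := hx
    exact ((mem_Dp_iff hp0 he0 hf0 hgpow).1 hx).1
  have hf2lt : f / 2 < f := Nat.div_lt_self hf0 (by norm_num)
  have hdisj : ∀ b, (↑(Finset.range (f / 2)) : Set ℕ).PairwiseDisjoint
      (fun i => Dp p e f g ((i + b) % f)) := by
    intro b i hi j hj hij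
    simp only [Finset.coe_range, Set.mem_Iio] at hi hj
    apply Dp_disjoint hp0 he0 hf0 hgpow
    rw [Nat.mod_mod_of_dvd _ dvd_rfl, Nat.mod_mod_of_dvd _ dvd_rfl]
    intro h
    have h1 : i + b ≡ j + b [MOD f] := h
    have h2 := Nat.ModEq.add_right_cancel' b h1
    rw [Nat.ModEq, Nat.mod_eq_of_lt (by omega), Nat.mod_eq_of_lt (by omega)] at h2
    exact hij h2
  have hTU : ∀ b, T b = ∑ x ∈ U b, γ ^ x := by
    intro b
    rw [hU, Finset.sum_biUnion (hdisj b), hT]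
  have hTcongr : ∀ b b', b % f = b' % f → T b = T b' := by
    intro b b' h
    rw [hT]
    apply Finset.sum_congr rfl
    intro i _
    simp only [hc]
    have hmod : (i + b) % f = (i + b') % f := Nat.ModEq.add_left i h
    rw [hmod]
  -- T v is the Hp sum
  have hHpT : ∑ t ∈ Hp p e f g v, β ^ t = T v := by
    have himg : Hp p e f g v = (U v).image fun x => p * x % p ^ 2 := by
      rw [Hp, hU, Finset.biUnion_image]
      rfl
    rw [himg, Finset.sum_image ?inj]
    case inj =>
      intro x hx y hy hxy
      have hxp := hUlt v x hx
      have hyp := hUlt v y hy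
      have hx2 : p * x < p ^ 2 := by rw [pow_two]; exact (Nat.mul_lt_mul_left hp0).2 hxp
      have hy2 : p * y < p ^ 2 := by rw [pow_two]; exact (Nat.mul_lt_mul_left hp0).2 hyp
      dsimp only at hxy
      rw [Nat.mod_eq_of_lt hx2, Nat.mod_eq_of_lt hy2] at hxy
      exact Nat.eq_of_mul_eq_mul_left hp0 hxy
    rw [hTU v]
    apply Finset.sum_congr rfl
    intro x _
    rw [hβmod, pow_mul]
  -- index of 2
  obtain ⟨k, hk⟩ : ∃ k : ℕ, ((2 : ℕ) : ZMod p) = (g : ZMod p) ^ k := by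
    have h2mem : (2 : ℕ) ∈ Finset.Ioo 0 p := by simp; omega
    rw [← biUnion_Dp_eq hp he0 hf0 hef hgpow, Finset.mem_biUnion] at h2mem
    obtain ⟨j, -, hj⟩ := h2mem
    rw [mem_Dp_iff hp0 he0 hf0 hgpow] at hj
    obtain ⟨-, a, -, ha⟩ := hj
    exact ⟨a, ha⟩
  -- Frobenius: squaring shifts by k
  have hexp2 : ExpChar K 2 := by infer_instance
  have hUimg : ∀ b, (U b).image (fun x => 2 * x % p) = U (b + k) := by
    intro b
    rw [hU, Finset.biUnion_image]
    apply Finset.biUnion_congr rfl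
    intro i _
    rw [image_two_mul_Dp hp hp2 he0 hf0 hgpow hk]
    apply Dp_eq_of_mod hp0 he0 hf0 hgpow
    rw [Nat.mod_add_mod, Nat.mod_mod_of_dvd _ dvd_rfl]
    congr 1
    ring
  have hfrob : ∀ b, (T b) ^ 2 = T (b + k) := by
    intro b
    rw [hTU, hTU, sum_pow_char]
    rw [← hUimg b, Finset.sum_image ?inj2]
    case inj2 =>
      intro x hx y hy hxy
      have hxp := hUlt b x hx
      have hyp := hUlt b y hy
      have hcx : ((2 * x % p : ℕ) : ZMod p) = ((2 * y % p : ℕ) : ZMod p) := by dsimp only at hxy; rw [hxy]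
      rw [ZMod.natCast_mod, ZMod.natCast_mod] at hcx
      push_cast at hcx
      have h2ne : (2 : ZMod p) ≠ 0 := by
        intro h
        have h1 : ((2 : ℕ) : ZMod p) = 0 := by exact_mod_cast h
        have h2 := (ZMod.natCast_eq_zero_iff 2 p).1 h1
        have := Nat.le_of_dvd (by norm_num) h2
        omega
      have := mul_left_cancel₀ h2ne hcx
      exact natcast_inj_lt hp0 hxp hyp this
    apply Finset.sum_congr rfl
    intro x _
    rw [hγmod, mul_comm 2 x, pow_mul]
  -- complement relation
  have h2dvdf : 2 ∣ f := by rw [hf]; exact dvd_pow_self 2 (by omega)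
  have hff : f / 2 + f / 2 = f := by omega
  have hcomp : ∀ b, T b + T (b + f / 2) = 1 := by
    intro b
    have hfull : ∑ i ∈ Finset.range f, c (i + b) = T b + T (b + f / 2) := by
      conv_lhs => rw [← hff]
      rw [Finset.sum_range_add, hT]
      simp only []
      congr 1
      apply Finset.sum_congr rfl
      intro i _
      congr 1
      omega
    have hshift : ∑ i ∈ Finset.range f, c (i + b) = ∑ i ∈ Finset.range f, c i :=
      sum_shift c f hcper b
    have hall : ∑ i ∈ Finset.range f, c i = 1 := by
      have hpart := biUnion_Dp_eq (p := p) (e := e) (f := f) (g := g) hp he0 hf0 hef hgpow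
      have hdisj2 : (↑(Finset.range f) : Set ℕ).PairwiseDisjoint
          (fun j => Dp p e f g j) := by
        intro i hi j hj hij
        simp only [Finset.coe_range, Set.mem_Iio] at hi hj
        apply Dp_disjoint hp0 he0 hf0 hgpow
        rw [Nat.mod_eq_of_lt hi, Nat.mod_eq_of_lt hj]
        exact hij
      have := Finset.sum_biUnion (f := fun x => γ ^ x) hdisj2
      rw [hpart] at this
      rw [← hIoo, this]
      apply Finset.sum_congr rfl
      intro i hi
      simp only [Finset.mem_range] at hi
      simp only [hc]
      rw [Nat.mod_eq_of_lt hi]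
    rw [← hfull, hshift, hall]
  have hone_ne : (1 : K) ≠ 0 := one_ne_zero
  -- membership criterion for 2
  have h2crit : 2 ∈ Dp p e f g 0 ↔ k % f = 0 := by
    rw [mem_Dp_iff hp0 he0 hf0 hgpow]
    constructor
    · rintro ⟨-, a, ha, ha2⟩
      have : (g : ZMod p) ^ a = (g : ZMod p) ^ k := by
        rw [← ha2]
        exact_mod_cast hk
      have hab := (hgpow a k).1 this
      have := Nat.ModEq.of_dvd (dvd_mul_left f e) hab
      rw [Nat.ModEq] at this
      rw [Nat.zero_mod] at ha
      omega
    · intro hkf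
      exact ⟨hp2, k, by rw [Nat.zero_mod, hkf], by exact_mod_cast hk⟩
  rw [hHpT]
  constructor
  · -- T v ∈ {0,1} → k % f = 0
    intro hmem
    simp only [Set.mem_insert_iff, Set.mem_singleton_iff] at hmem
    have hTT : T v ^ 2 = T v := by
      rcases hmem with h | h
      · rw [h]; ring
      · rw [h]; ring
    by_contra hkf
    rw [h2crit] at hkf
    -- iterate: T (v + j * k) = T v
    have hiter : ∀ j : ℕ, T (v + j * k) = T v := by
      intro j
      induction j with
      | zero => simp
      | succ j ih =>
        have : v + (j + 1) * k = (v + j * k) + k := by ring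
        rw [this, ← hfrob, ih, hTT]
    obtain ⟨j, hj⟩ := exists_mul_mod_half hr hf hkf
    have hjT : T (v + j * k) = T (v + f / 2) := by
      apply hTcongr
      exact Nat.ModEq.add_left v hj
    have hcv := hcomp v
    rw [← hjT, hiter j] at hcv
    -- T v + T v = 1, but char 2 gives 0 = 1
    have h2 : T v + T v = 0 := by
      have h2z : (2 : K) = 0 := by exact_mod_cast CharP.cast_eq_zero K 2
      linear_combination T v * h2z
    exact hone_ne (h2.symm.trans hcv).symm
  · -- k % f = 0 → T v ∈ {0,1}
    intro hkf
    rw [h2crit] at hkf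
    have hsq : T v ^ 2 = T v := by
      rw [hfrob v]
      apply hTcongr
      rw [Nat.add_mod, hkf, add_zero, Nat.mod_mod_of_dvd _ dvd_rfl]
    have : T v * (T v - 1) = 0 := by linear_combination hsq
    simp only [Set.mem_insert_iff, Set.mem_singleton_iff]
    rcases mul_eq_zero.1 this with h | h
    · left; exact h
    · right
      linear_combination h
end

section
/- Suppose 2^e ≢ 1 (mod p²) and 2 ∉ D_0^{(p)} (equivalently 2^e ≢ 1 (mod p)). Then the linear complexity of the sequence s equals p²; equivalently, gcd(x^{p²} − 1, S(x)) = 1 in F₂[x]. -/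
open Finset Polynomial

/-- The polynomial `S(x) = Σ_{i=0}^{p²-1} s_i x^i` over `F₂`, where `s_i = 1` iff `i mod p² ∈ C₁`. -/
noncomputable def Spoly (p e f g b : ℕ) : Polynomial (ZMod 2) :=
  ∑ i ∈ Finset.range (p ^ 2),
    if i % p ^ 2 ∈ C1 p e f g b then (Polynomial.X : Polynomial (ZMod 2)) ^ i else 0

namespace S17

lemma one_add_pow_of_sq_zero {R : Type*} [CommRing R] (u : R) (hu : u * u = 0) :
    ∀ n : ℕ, (1 + u) ^ n = 1 + (n : R) * u := by
  intro n
  induction n with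
  | zero => simp
  | succ n ih =>
    rw [pow_succ, ih]
    have : (1 + (n : R) * u) * (1 + u) = 1 + ((n:R)+1) * u + (n:R) * (u * u) := by ring
    rw [this, hu]
    push_cast
    ring

end S17

namespace S17

variable {p e f g : ℕ}

lemma not_dvd_g (hp : p.Prime) (hg : orderOf (g : ZMod (p ^ 2)) = p * (p - 1)) :
    ¬ p ∣ g := by
  intro ⟨c, hc⟩
  haveI : Fact (1 < p ^ 2) := ⟨by nlinarith [hp.two_le]⟩
  have h2 : ((g : ZMod (p ^ 2)))^2 = 0 := by
    subst hc
    push_cast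
    rw [mul_pow, ← Nat.cast_pow, ZMod.natCast_self]
    ring
  have hord : 0 < p * (p - 1) := by
    have := hp.two_le
    have : 0 < p - 1 := by omega
    positivity
  have h1 : ((g : ZMod (p ^ 2)))^(p * (p-1)) = 1 := by
    rw [← hg]; exact pow_orderOf_eq_one _
  have hge : 2 ≤ p * (p - 1) := by
    have h := hp.two_le
    have : 1 ≤ p - 1 := by omega
    nlinarith
  have : (1 : ZMod (p^2)) = 0 := by
    rw [← h1, ← Nat.sub_add_cancel hge, pow_add, pow_two] at *
    rw [h2]; ring
  exact one_ne_zero this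

lemma ord_mod_p (hp : Fact (Nat.Prime p)) (hg : orderOf (g : ZMod (p ^ 2)) = p * (p - 1)) :
    orderOf (g : ZMod p) = p - 1 := by
  have hpd : ¬ p ∣ g := not_dvd_g hp.out hg
  have hgne : (g : ZMod p) ≠ 0 := by
    rw [Ne, ZMod.natCast_eq_zero_iff]; exact hpd
  -- m ∣ p - 1
  have hdvd : orderOf (g : ZMod p) ∣ p - 1 :=
    orderOf_dvd_of_pow_eq_one (ZMod.pow_card_sub_one_eq_one hgne)
  set m := orderOf (g : ZMod p) with hm
  -- lift: (g : ZMod p²)^(m*p) = 1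
  haveI : NeZero p := ⟨hp.out.ne_zero⟩
  haveI : NeZero (p^2) := ⟨pow_ne_zero 2 hp.out.ne_zero⟩
  have hcast : (ZMod.castHom (dvd_pow_self p (by norm_num : (2:ℕ) ≠ 0)) (ZMod p))
      ((g : ZMod (p^2))^m) = 1 := by
    rw [map_pow, map_natCast]
    exact pow_orderOf_eq_one _
  set x : ZMod (p^2) := (g : ZMod (p^2))^m with hx
  set u : ZMod (p^2) := x - 1 with hud
  have hu0 : (ZMod.castHom (dvd_pow_self p (by norm_num : (2:ℕ) ≠ 0)) (ZMod p)) u = 0 := by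
    rw [hud, map_sub, hcast, map_one, sub_self]
  have huval : ((u.val : ℕ) : ZMod (p^2)) = u := by
    rw [ZMod.natCast_val, ZMod.cast_id]
  have hpuval : p ∣ u.val := by
    rw [← ZMod.natCast_eq_zero_iff]
    have h := map_natCast (ZMod.castHom (dvd_pow_self p (by norm_num : (2:ℕ) ≠ 0)) (ZMod p)) u.val
    rw [huval, hu0] at h
    exact h.symm
  obtain ⟨c, hc⟩ := hpuval
  have hu2 : u * u = 0 := by
    rw [← huval, hc]
    push_cast
    have : ((p:ZMod (p^2)) * c) * ((p:ZMod (p^2)) * c) = ((p:ZMod (p^2)))^2 * c^2 := by ring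
    rw [this, ← Nat.cast_pow, ZMod.natCast_self]
    ring
  have hxp : x ^ p = 1 := by
    have : x = 1 + u := by rw [hud]; ring
    rw [this, one_add_pow_of_sq_zero u hu2 p, ← huval, hc]
    push_cast
    have : (p:ZMod (p^2)) * ((p:ZMod (p^2)) * c) = ((p:ZMod (p^2)))^2 * c := by ring
    rw [this, ← Nat.cast_pow, ZMod.natCast_self]
    ring
  have h2 : p * (p - 1) ∣ m * p := by
    rw [← hg]
    apply orderOf_dvd_of_pow_eq_one
    rw [pow_mul]
    exact hxp
  have h3 : (p - 1) ∣ m := by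
    have hp0 : 0 < p := hp.out.pos
    rw [mul_comm m p] at h2
    exact (mul_dvd_mul_iff_left (by omega : p ≠ 0)).mp h2
  exact Nat.dvd_antisymm hdvd h3

end S17

namespace S17

variable {p e f g : ℕ}

lemma unit_pow_eq_iff {n : ℕ} (x : ZMod n) (hx : IsOfFinOrder x) {a b : ℕ} :
    x ^ a = x ^ b ↔ a ≡ b [MOD orderOf x] := by
  obtain ⟨u, hu⟩ := hx.isUnit
  subst hu
  constructor
  · intro hab
    have h2 : u ^ a = u ^ b := Units.ext (by simpa [Units.val_pow_eq_pow_val] using hab)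
    have h3 := pow_eq_pow_iff_modEq.mp h2
    rwa [orderOf_units]
  · intro hab
    have h2 : u ^ a = u ^ b := pow_eq_pow_iff_modEq.mpr (by rwa [orderOf_units] at hab)
    simpa [← Units.val_pow_eq_pow_val] using congrArg Units.val h2


section Cong
variable (hp : Nat.Prime p) (hef : p - 1 = e * f)
  (hg : orderOf (g : ZMod (p ^ 2)) = p * (p - 1))
include hp hef hg

lemma fin_g2 : IsOfFinOrder (g : ZMod (p ^ 2)) := by
  rw [← orderOf_pos_iff, hg]
  have := hp.two_le
  have : 1 ≤ p - 1 := by omega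
  positivity

lemma fin_g1 : IsOfFinOrder (g : ZMod p) := by
  rw [← orderOf_pos_iff, ord_mod_p ⟨hp⟩ hg]
  have := hp.two_le
  omega

lemma pow_modeq_inj2 {a b : ℕ} : g ^ a ≡ g ^ b [MOD p ^ 2] ↔ a ≡ b [MOD p * (e * f)] := by
  rw [← ZMod.natCast_eq_natCast_iff]
  push_cast
  rw [unit_pow_eq_iff _ (fin_g2 hp hef hg), hg, hef]

lemma pow_modeq_inj1 {a b : ℕ} : g ^ a ≡ g ^ b [MOD p] ↔ a ≡ b [MOD e * f] := by
  rw [← ZMod.natCast_eq_natCast_iff]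
  push_cast
  rw [unit_pow_eq_iff _ (fin_g1 hp hef hg), ord_mod_p ⟨hp⟩ hg, hef]

lemma g_pow_ef : g ^ (e * f) ≡ 1 [MOD p] := by
  have := (pow_modeq_inj1 (g := g) hp hef hg (a := e * f) (b := 0)).mpr
    (by simp [Nat.modEq_zero_iff_dvd])
  simpa using this

lemma g_pow_pef : g ^ (p * (e * f)) ≡ 1 [MOD p ^ 2] := by
  have := (pow_modeq_inj2 (g := g) hp hef hg (a := p * (e * f)) (b := 0)).mpr
    (by simp [Nat.modEq_zero_iff_dvd])
  simpa using this

end Cong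

lemma not_dvd_gpow_mod_sq (hp : Nat.Prime p)
    (hg : orderOf (g : ZMod (p ^ 2)) = p * (p - 1)) (m : ℕ) : ¬ p ∣ (g ^ m % p ^ 2) := by
  intro h
  have h2 : p ∣ g ^ m := by
    have heq : g ^ m % p ^ 2 + p ^ 2 * (g ^ m / p ^ 2) = g ^ m := Nat.mod_add_div _ _
    have hpp : p ∣ p ^ 2 := dvd_pow_self p two_ne_zero
    rw [← heq]
    exact Nat.dvd_add h (hpp.mul_right _)
  exact not_dvd_g hp hg (hp.dvd_of_dvd_pow h2)

lemma gpow_mod_p_ne_zero (hp : Nat.Prime p)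
    (hg : orderOf (g : ZMod (p ^ 2)) = p * (p - 1)) (m : ℕ) : g ^ m % p ≠ 0 := by
  intro h
  have h2 : p ∣ g ^ m := Nat.dvd_of_mod_eq_zero h
  exact not_dvd_g hp hg (hp.dvd_of_dvd_pow h2)

end S17

namespace S17

variable {M : Type*} [AddCommMonoid M]

lemma sum_range_add' (F : ℕ → M) (a b : ℕ) :
    ∑ m ∈ range (a + b), F m = (∑ m ∈ range a, F m) + ∑ j ∈ range b, F (a + j) := by
  have h := Finset.sum_Ico_consecutive F (Nat.zero_le a) (Nat.le_add_right a b)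
  rw [Finset.sum_Ico_eq_sum_range (f := F) (m := a) (n := a + b)] at h
  simpa [Nat.add_sub_cancel_left, ← range_eq_Ico] using h.symm

lemma sum_blocks (h : ℕ → M) (e f : ℕ) :
    ∑ m ∈ range (e * f), h m = ∑ t ∈ range e, ∑ j ∈ range f, h (f * t + j) := by
  induction e with
  | zero => simp
  | succ e ih =>
    have : (e + 1) * f = e * f + f := by ring
    rw [this, sum_range_add', ih, sum_range_succ]
    congr 1
    apply Finset.sum_congr rfl
    intro j _
    congr 1
    ring

lemma sum_shift_cyclic {M : Type*} [AddCancelCommMonoid M] (F : ℕ → M) (e : ℕ)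
    (h : F e = F 0) : ∑ t ∈ range e, F (t + 1) = ∑ t ∈ range e, F t := by
  have h1 : ∑ t ∈ range e, F (t + 1) + F 0 = ∑ t ∈ range (e + 1), F t :=
    (sum_range_succ' F e).symm
  rw [sum_range_succ, h] at h1
  exact add_right_cancel h1

lemma pow_eq_of_modeq {G : Type*} [Monoid G] {w : G} {n a b : ℕ} (h : w ^ n = 1)
    (hab : a ≡ b [MOD n]) : w ^ a = w ^ b := by
  rw [pow_eq_pow_mod a h, pow_eq_pow_mod b h]
  unfold Nat.ModEq at hab
  rw [hab]

lemma geom_zero {K : Type*} [Field K] {x : K} (hx : x ≠ 1) {n : ℕ} (h : x ^ n = 1) :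
    ∑ i ∈ range n, x ^ i = 0 := by
  rw [geom_sum_eq hx, h, sub_self, zero_div]

end S17

namespace S17

variable {K : Type*} [Field K]

/-- `T1 w j = ∑_{t<e} w^(g^(f t + j))`, intended for `w^p = 1`. -/
def T1 (e f g : ℕ) (w : K) (j : ℕ) : K := ∑ t ∈ range e, w ^ (g ^ (f * t + j))

/-- `T2 z j = ∑_{t<e} z^(g^(p f t + j))`, intended for `z^(p²) = 1`. -/
def T2 (p e f g : ℕ) (z : K) (j : ℕ) : K := ∑ t ∈ range e, z ^ (g ^ (p * f * t + j))

def eta (e f g : ℕ) (w : K) (c : ℕ) : K := ∑ i ∈ range (f / 2), T1 e f g w (i + c)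

def theta (p e f g : ℕ) (z : K) (c : ℕ) : K :=
  ∑ i ∈ range (p * f / 2), T2 p e f g z (i + c)

variable {p e f g : ℕ}

section Sums
variable (hp : Nat.Prime p) (hef : p - 1 = e * f)
  (hg : orderOf (g : ZMod (p ^ 2)) = p * (p - 1))
include hp hef hg

lemma T1_term {w : K} (hw : w ^ p = 1) {a b : ℕ} (hab : a ≡ b [MOD e * f]) :
    w ^ (g ^ a) = w ^ (g ^ b) :=
  pow_eq_of_modeq hw ((pow_modeq_inj1 hp hef hg).mpr hab)

lemma T2_term {z : K} (hz : z ^ p ^ 2 = 1) {a b : ℕ} (hab : a ≡ b [MOD p * (e * f)]) :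
    z ^ (g ^ a) = z ^ (g ^ b) :=
  pow_eq_of_modeq hz ((pow_modeq_inj2 hp hef hg).mpr hab)

lemma T1_periodic {w : K} (hw : w ^ p = 1) {c1 c2 : ℕ} (hc : c1 ≡ c2 [MOD f]) :
    T1 e f g w c1 = T1 e f g w c2 := by
  -- step 1: T1 (j + f) = T1 j
  have step : ∀ j : ℕ, T1 e f g w (j + f) = T1 e f g w j := by
    intro j
    have h1 : T1 e f g w (j + f) = ∑ t ∈ range e, w ^ (g ^ (f * (t + 1) + j)) := by
      unfold T1
      apply Finset.sum_congr rfl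
      intro t _
      congr 1
      ring_nf
    rw [h1]
    unfold T1
    apply sum_shift_cyclic (fun t => w ^ (g ^ (f * t + j))) e
    apply T1_term hp hef hg hw
    simp only [Nat.mul_zero, Nat.zero_add]
    calc f * e + j ≡ 0 + j [MOD e * f] := by
          apply Nat.ModEq.add_right
          rw [Nat.modEq_zero_iff_dvd, mul_comm]
        _ = j := by omega
  -- step 2: T1 (j + f * s) = T1 j
  have step2 : ∀ j s : ℕ, T1 e f g w (j + f * s) = T1 e f g w j := by
    intro j s
    induction s with
    | zero => simp
    | succ s ih =>
      have : j + f * (s + 1) = (j + f * s) + f := by ring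
      rw [this, step, ih]
  have e1 : T1 e f g w c1 = T1 e f g w (c1 % f) := by
    conv_lhs => rw [← Nat.mod_add_div c1 f]
    exact step2 _ _
  have e2 : T1 e f g w c2 = T1 e f g w (c2 % f) := by
    conv_lhs => rw [← Nat.mod_add_div c2 f]
    exact step2 _ _
  rw [e1, e2, hc]

lemma T2_periodic {z : K} (hz : z ^ p ^ 2 = 1) {c1 c2 : ℕ} (hc : c1 ≡ c2 [MOD p * f]) :
    T2 p e f g z c1 = T2 p e f g z c2 := by
  have step : ∀ j : ℕ, T2 p e f g z (j + p * f) = T2 p e f g z j := by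
    intro j
    have h1 : T2 p e f g z (j + p * f) = ∑ t ∈ range e, z ^ (g ^ (p * f * (t + 1) + j)) := by
      unfold T2
      apply Finset.sum_congr rfl
      intro t _
      congr 1
      ring_nf
    rw [h1]
    unfold T2
    apply sum_shift_cyclic (fun t => z ^ (g ^ (p * f * t + j))) e
    apply T2_term hp hef hg hz
    simp only [Nat.mul_zero, Nat.zero_add]
    calc p * f * e + j ≡ 0 + j [MOD p * (e * f)] := by
          apply Nat.ModEq.add_right
          rw [Nat.modEq_zero_iff_dvd]
          exact ⟨1, by ring⟩
        _ = j := by omega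
  have step2 : ∀ j s : ℕ, T2 p e f g z (j + (p * f) * s) = T2 p e f g z j := by
    intro j s
    induction s with
    | zero => simp
    | succ s ih =>
      have : j + (p * f) * (s + 1) = (j + (p * f) * s) + p * f := by ring
      rw [this, step, ih]
  have e1 : T2 p e f g z c1 = T2 p e f g z (c1 % (p * f)) := by
    conv_lhs => rw [← Nat.mod_add_div c1 (p * f)]
    exact step2 _ _
  have e2 : T2 p e f g z c2 = T2 p e f g z (c2 % (p * f)) := by
    conv_lhs => rw [← Nat.mod_add_div c2 (p * f)]
    exact step2 _ _
  rw [e1, e2, hc]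

end Sums

end S17

namespace S17

variable {K : Type*} [Field K] {p e f g : ℕ}

section Frob
variable [CharP K 2]
variable (hp : Nat.Prime p) (hef : p - 1 = e * f)
  (hg : orderOf (g : ZMod (p ^ 2)) = p * (p - 1))
include hp hef hg

lemma T1_sq {w : K} (hw : w ^ p = 1) {KK : ℕ} (h2K : g ^ KK ≡ 2 [MOD p]) (j : ℕ) :
    (T1 e f g w j) ^ 2 = T1 e f g w (j + KK) := by
  unfold T1
  rw [CharTwo.sum_sq]
  apply Finset.sum_congr rfl
  intro t _
  rw [← pow_mul]
  have hcong : g ^ (f * t + j) * 2 ≡ g ^ (f * t + (j + KK)) [MOD p] := by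
    calc g ^ (f * t + j) * 2 ≡ g ^ (f * t + j) * g ^ KK [MOD p] :=
          (h2K.symm).mul_left _
      _ = g ^ (f * t + (j + KK)) := by rw [← pow_add]; congr 1; ring
  exact pow_eq_of_modeq hw hcong

lemma T2_sq {z : K} (hz : z ^ p ^ 2 = 1) {KK : ℕ} (h2K : g ^ KK ≡ 2 [MOD p ^ 2]) (j : ℕ) :
    (T2 p e f g z j) ^ 2 = T2 p e f g z (j + KK) := by
  unfold T2
  rw [CharTwo.sum_sq]
  apply Finset.sum_congr rfl
  intro t _
  rw [← pow_mul]
  have hcong : g ^ (p * f * t + j) * 2 ≡ g ^ (p * f * t + (j + KK)) [MOD p ^ 2] := by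
    calc g ^ (p * f * t + j) * 2 ≡ g ^ (p * f * t + j) * g ^ KK [MOD p ^ 2] :=
          (h2K.symm).mul_left _
      _ = g ^ (p * f * t + (j + KK)) := by rw [← pow_add]; congr 1; ring
  exact pow_eq_of_modeq hz hcong

lemma eta_sq {w : K} (hw : w ^ p = 1) {KK : ℕ} (h2K : g ^ KK ≡ 2 [MOD p]) (c : ℕ) :
    (eta e f g w c) ^ 2 = eta e f g w (c + KK) := by
  unfold eta
  rw [CharTwo.sum_sq]
  apply Finset.sum_congr rfl
  intro i _
  rw [T1_sq hp hef hg hw h2K]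
  congr 1
  ring

lemma theta_sq {z : K} (hz : z ^ p ^ 2 = 1) {KK : ℕ} (h2K : g ^ KK ≡ 2 [MOD p ^ 2]) (c : ℕ) :
    (theta p e f g z c) ^ 2 = theta p e f g z (c + KK) := by
  unfold theta
  rw [CharTwo.sum_sq]
  apply Finset.sum_congr rfl
  intro i _
  rw [T2_sq hp hef hg hz h2K]
  congr 1
  ring

-- full-cycle sum over units mod p
lemma B1 {w : K} (hw1 : w ≠ 1) (hw : w ^ p = 1) (c : ℕ) :
    ∑ m ∈ range (e * f), w ^ (g ^ (m + c)) = 1 := by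
  classical
  have hp0 : 0 < p := hp.pos
  set φ : ℕ → ℕ := fun m => g ^ (m + c) % p with hφ
  have hinj : ∀ x ∈ range (e * f), ∀ y ∈ range (e * f), φ x = φ y → x = y := by
    intro x hx y hy hxy
    rw [mem_range] at hx hy
    have : g ^ (x + c) ≡ g ^ (y + c) [MOD p] := hxy
    have h2 := (pow_modeq_inj1 hp hef hg).mp this
    have h3 : x ≡ y [MOD e * f] := h2.add_right_cancel' c
    unfold Nat.ModEq at h3
    rwa [Nat.mod_eq_of_lt hx, Nat.mod_eq_of_lt hy] at h3
  have himg : Finset.image φ (range (e * f)) = (range p).erase 0 := by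
    apply Finset.eq_of_subset_of_card_le
    · intro x hx
      rw [Finset.mem_image] at hx
      obtain ⟨m, _, rfl⟩ := hx
      rw [Finset.mem_erase, mem_range]
      exact ⟨gpow_mod_p_ne_zero hp hg _, Nat.mod_lt _ hp0⟩
    · rw [Finset.card_erase_of_mem (by rw [mem_range]; exact hp0),
        Finset.card_image_of_injOn hinj, Finset.card_range, Finset.card_range, ← hef]
  have hterm : ∀ m, w ^ (g ^ (m + c)) = w ^ (φ m) := by
    intro m
    exact pow_eq_pow_mod _ hw
  calc ∑ m ∈ range (e * f), w ^ (g ^ (m + c))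
      = ∑ m ∈ range (e * f), w ^ (φ m) := Finset.sum_congr rfl fun m _ => hterm m
    _ = ∑ x ∈ Finset.image φ (range (e * f)), w ^ x := (Finset.sum_image hinj).symm
    _ = ∑ x ∈ (range p).erase 0, w ^ x := by rw [himg]
    _ = 1 := by
        have h0 : (0 : ℕ) ∈ range p := by rw [mem_range]; exact hp0
        have hsum := Finset.add_sum_erase (range p) (fun x => w ^ x) h0
        rw [geom_zero hw1 hw] at hsum
        have : w ^ (0:ℕ) + ∑ x ∈ (range p).erase 0, w ^ x = 0 := hsum
        rw [pow_zero] at this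
        have h2 : ∑ x ∈ (range p).erase 0, w ^ x = -1 := by linear_combination this
        rw [h2, CharTwo.neg_eq]

-- full-cycle sum over units mod p²
lemma B1' {z : K} (hzp : z ^ p ≠ 1) (hz : z ^ p ^ 2 = 1) (c : ℕ) :
    ∑ m ∈ range (p * (e * f)), z ^ (g ^ (m + c)) = 0 := by
  classical
  have hp0 : 0 < p := hp.pos
  have hz1 : z ≠ 1 := fun h => hzp (by rw [h, one_pow])
  set φ : ℕ → ℕ := fun m => g ^ (m + c) % p ^ 2 with hφ
  have hinj : ∀ x ∈ range (p * (e * f)), ∀ y ∈ range (p * (e * f)), φ x = φ y → x = y := by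
    intro x hx y hy hxy
    rw [mem_range] at hx hy
    have : g ^ (x + c) ≡ g ^ (y + c) [MOD p ^ 2] := hxy
    have h2 := (pow_modeq_inj2 hp hef hg).mp this
    have h3 : x ≡ y [MOD p * (e * f)] := h2.add_right_cancel' c
    unfold Nat.ModEq at h3
    rwa [Nat.mod_eq_of_lt hx, Nat.mod_eq_of_lt hy] at h3
  set Mult : Finset ℕ := Finset.image (fun y => p * y) (range p) with hMult
  have hMultsub : Mult ⊆ range (p ^ 2) := by
    intro x hx
    rw [hMult, Finset.mem_image] at hx
    obtain ⟨y, hy, rfl⟩ := hx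
    rw [mem_range] at hy ⊢
    calc p * y < p * p := by exact (Nat.mul_lt_mul_left hp0).mpr hy
      _ = p ^ 2 := (sq p).symm
  have hMultcard : Mult.card = p := by
    rw [hMult, Finset.card_image_of_injOn, Finset.card_range]
    intro x _ y _ hxy
    exact Nat.eq_of_mul_eq_mul_left hp0 hxy
  have himg : Finset.image φ (range (p * (e * f))) = range (p ^ 2) \ Mult := by
    apply Finset.eq_of_subset_of_card_le
    · intro x hx
      rw [Finset.mem_image] at hx
      obtain ⟨m, _, rfl⟩ := hx
      rw [Finset.mem_sdiff, mem_range]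
      refine ⟨Nat.mod_lt _ (by positivity), ?_⟩
      intro hmem
      rw [hMult, Finset.mem_image] at hmem
      obtain ⟨y, _, hy⟩ := hmem
      exact not_dvd_gpow_mod_sq hp hg (m + c) ⟨y, hy.symm⟩
    · rw [Finset.card_sdiff_of_subset hMultsub, hMultcard,
        Finset.card_image_of_injOn hinj, Finset.card_range, Finset.card_range]
      obtain ⟨t, ht⟩ : ∃ t, p = t + 1 := ⟨p - 1, by omega⟩
      have hef' : t = e * f := by omega
      subst ht
      rw [← hef']
      have : (t + 1) ^ 2 = (t + 1) * t + (t + 1) := by ring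
      omega
  have hterm : ∀ m, z ^ (g ^ (m + c)) = z ^ (φ m) := fun m => pow_eq_pow_mod _ hz
  calc ∑ m ∈ range (p * (e * f)), z ^ (g ^ (m + c))
      = ∑ m ∈ range (p * (e * f)), z ^ (φ m) := Finset.sum_congr rfl fun m _ => hterm m
    _ = ∑ x ∈ Finset.image φ (range (p * (e * f))), z ^ x := (Finset.sum_image hinj).symm
    _ = ∑ x ∈ range (p ^ 2) \ Mult, z ^ x := by rw [himg]
    _ = 0 := by
        rw [Finset.sum_sdiff_eq_sub hMultsub, geom_zero hz1 hz]
        have : ∑ x ∈ Mult, z ^ x = 0 := by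
          rw [hMult, Finset.sum_image (fun x _ y _ h => Nat.eq_of_mul_eq_mul_left hp0 h)]
          have : ∀ y, z ^ (p * y) = (z ^ p) ^ y := fun y => by rw [← pow_mul]
          rw [Finset.sum_congr rfl fun y _ => this y]
          have hzp2 : (z ^ p) ^ p = 1 := by rw [← pow_mul, ← pow_two]; exact hz
          exact geom_zero hzp hzp2
        rw [this, sub_zero]

end Frob

end S17

namespace S17

variable {K : Type*} [Field K] {p e f g : ℕ}

section Wind
variable [CharP K 2]
variable (hp : Nat.Prime p) (hef : p - 1 = e * f)
  (hg : orderOf (g : ZMod (p ^ 2)) = p * (p - 1))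
include hp hef hg

lemma T1_window {w : K} (hw1 : w ≠ 1) (hw : w ^ p = 1) (c : ℕ) :
    ∑ j ∈ range f, T1 e f g w (j + c) = 1 := by
  have h1 : ∑ j ∈ range f, T1 e f g w (j + c)
      = ∑ t ∈ range e, ∑ j ∈ range f, w ^ (g ^ ((f * t + j) + c)) := by
    unfold T1
    rw [Finset.sum_comm]
    apply Finset.sum_congr rfl; intro t _
    apply Finset.sum_congr rfl; intro j _
    congr 2
    omega
  rw [h1, ← sum_blocks (fun m => w ^ (g ^ (m + c))) e f]
  exact B1 hp hef hg hw1 hw c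

lemma T2_window {z : K} (hzp : z ^ p ≠ 1) (hz : z ^ p ^ 2 = 1) (c : ℕ) :
    ∑ j ∈ range (p * f), T2 p e f g z (j + c) = 0 := by
  have h1 : ∑ j ∈ range (p * f), T2 p e f g z (j + c)
      = ∑ t ∈ range e, ∑ j ∈ range (p * f), z ^ (g ^ ((p * f * t + j) + c)) := by
    unfold T2
    rw [Finset.sum_comm]
    apply Finset.sum_congr rfl; intro t _
    apply Finset.sum_congr rfl; intro j _
    congr 2
    omega
  rw [h1, ← sum_blocks (fun m => z ^ (g ^ (m + c))) e (p * f)]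
  have : e * (p * f) = p * (e * f) := by ring
  rw [this]
  exact B1' hp hef hg hzp hz c

lemma eta_window (hfe : f = f / 2 + f / 2) {w : K} (hw1 : w ≠ 1) (hw : w ^ p = 1) (c : ℕ) :
    eta e f g w c + eta e f g w (c + f / 2) = 1 := by
  have hsplit : ∑ j ∈ range f, T1 e f g w (j + c)
      = (∑ j ∈ range (f / 2), T1 e f g w (j + c))
        + ∑ j ∈ range (f / 2), T1 e f g w (j + (c + f / 2)) := by
    conv_lhs => rw [show range f = range (f / 2 + f / 2) from by rw [← hfe]]
    rw [sum_range_add']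
    congr 1
    apply Finset.sum_congr rfl; intro j _
    congr 1
    omega
  rw [← T1_window hp hef hg hw1 hw c, hsplit]
  rfl

lemma theta_window (hpfe : p * f = p * f / 2 + p * f / 2) {z : K} (hzp : z ^ p ≠ 1)
    (hz : z ^ p ^ 2 = 1) (c : ℕ) :
    theta p e f g z (c + p * f / 2) = theta p e f g z c := by
  have hsplit : ∑ j ∈ range (p * f), T2 p e f g z (j + c)
      = (∑ j ∈ range (p * f / 2), T2 p e f g z (j + c))
        + ∑ j ∈ range (p * f / 2), T2 p e f g z (j + (c + p * f / 2)) := by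
    conv_lhs => rw [show range (p * f) = range (p * f / 2 + p * f / 2) from by rw [← hpfe]]
    rw [sum_range_add']
    congr 1
    apply Finset.sum_congr rfl; intro j _
    congr 1
    omega
  have h0 := T2_window hp hef hg hzp hz c
  rw [hsplit] at h0
  have : theta p e f g z c + theta p e f g z (c + p * f / 2) = 0 := h0
  have h2 : (2 : K) = 0 := CharTwo.two_eq_zero
  linear_combination this - theta p e f g z c * h2

end Wind

end S17


namespace S17

variable {p e f g : ℕ}

section KIdx
variable (hp : Nat.Prime p) (hef : p - 1 = e * f)
  (hg : orderOf (g : ZMod (p ^ 2)) = p * (p - 1))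
include hp hef hg

lemma p_ge_three (hodd : Odd p) : 3 ≤ p := by
  have h2 := hp.two_le
  have h3 := Nat.odd_iff.mp hodd
  omega

lemma exists_pow_eq_two (hodd : Odd p) : ∃ KK, g ^ KK ≡ 2 [MOD p ^ 2] := by
  classical
  have hp0 : 0 < p := hp.pos
  have hp3 : 3 ≤ p := p_ge_three hp hef hg hodd
  set φ : ℕ → ℕ := fun m => g ^ m % p ^ 2 with hφ
  have hinj : ∀ x ∈ range (p * (e * f)), ∀ y ∈ range (p * (e * f)), φ x = φ y → x = y := by
    intro x hx y hy hxy
    rw [mem_range] at hx hy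
    have : g ^ x ≡ g ^ y [MOD p ^ 2] := hxy
    have h3 := (pow_modeq_inj2 hp hef hg).mp this
    unfold Nat.ModEq at h3
    rwa [Nat.mod_eq_of_lt hx, Nat.mod_eq_of_lt hy] at h3
  set Mult : Finset ℕ := Finset.image (fun y => p * y) (range p) with hMult
  have hMultsub : Mult ⊆ range (p ^ 2) := by
    intro x hx
    rw [hMult, Finset.mem_image] at hx
    obtain ⟨y, hy, rfl⟩ := hx
    rw [mem_range] at hy ⊢
    calc p * y < p * p := (Nat.mul_lt_mul_left hp0).mpr hy
      _ = p ^ 2 := (sq p).symm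
  have hMultcard : Mult.card = p := by
    rw [hMult, Finset.card_image_of_injOn, Finset.card_range]
    intro x _ y _ hxy
    exact Nat.eq_of_mul_eq_mul_left hp0 hxy
  have himg : Finset.image φ (range (p * (e * f))) = range (p ^ 2) \ Mult := by
    apply Finset.eq_of_subset_of_card_le
    · intro x hx
      rw [Finset.mem_image] at hx
      obtain ⟨m, _, rfl⟩ := hx
      rw [Finset.mem_sdiff, mem_range]
      refine ⟨Nat.mod_lt _ (by positivity), ?_⟩
      intro hmem
      rw [hMult, Finset.mem_image] at hmem
      obtain ⟨y, _, hy⟩ := hmem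
      exact not_dvd_gpow_mod_sq hp hg m ⟨y, hy.symm⟩
    · rw [Finset.card_sdiff_of_subset hMultsub, hMultcard,
        Finset.card_image_of_injOn hinj, Finset.card_range, Finset.card_range]
      obtain ⟨t, ht⟩ : ∃ t, p = t + 1 := ⟨p - 1, by omega⟩
      have hef2 : t = e * f := by omega
      subst ht
      rw [← hef2]
      have : (t + 1) ^ 2 = (t + 1) * t + (t + 1) := by ring
      omega
  have h2mem : 2 ∈ range (p ^ 2) \ Mult := by
    rw [Finset.mem_sdiff, mem_range]
    constructor
    · nlinarith
    · intro hmem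
      rw [hMult, Finset.mem_image] at hmem
      obtain ⟨y, _, hy⟩ := hmem
      have : p ∣ 2 := ⟨y, hy.symm⟩
      have := Nat.le_of_dvd (by norm_num) this
      omega
  rw [← himg, Finset.mem_image] at h2mem
  obtain ⟨m, _, hm⟩ := h2mem
  refine ⟨m, ?_⟩
  have h2lt : (2 : ℕ) % p ^ 2 = 2 := Nat.mod_eq_of_lt (by nlinarith)
  show g ^ m % p ^ 2 = 2 % p ^ 2
  rw [h2lt]
  exact hm

lemma f_not_dvd_K (hodd : Odd p) (h2 : 2 ∉ (Finset.range e).image (fun t => g ^ (f * t + 0) % p)) {KK : ℕ}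
    (hK : g ^ KK ≡ 2 [MOD p]) : ¬ f ∣ KK := by
  rintro ⟨k', rfl⟩
  apply h2
  have hp3 : 3 ≤ p := p_ge_three hp hef hg hodd
  have he0 : 0 < e := by
    rcases Nat.eq_zero_or_pos e with h | h
    · subst h; simp at hef; omega
    · exact h
  have hsplit : f * k' = f * (k' % e) + (e * f) * (k' / e) := by
    conv_lhs => rw [← Nat.mod_add_div k' e]
    ring
  have hmod : f * k' ≡ f * (k' % e) [MOD e * f] := by
    rw [hsplit]
    have : (e * f) * (k' / e) ≡ 0 [MOD e * f] :=
      (Nat.modEq_zero_iff_dvd).mpr (dvd_mul_right _ _)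
    calc f * (k' % e) + (e * f) * (k' / e) ≡ f * (k' % e) + 0 [MOD e * f] :=
          Nat.ModEq.add_left _ this
      _ = f * (k' % e) := by omega
  have hcong : g ^ (f * (k' % e)) ≡ 2 [MOD p] :=
    ((pow_modeq_inj1 hp hef hg).mpr hmod.symm).trans hK
  rw [Finset.mem_image]
  refine ⟨k' % e, by rw [mem_range]; exact Nat.mod_lt _ he0, ?_⟩
  have : g ^ (f * (k' % e) + 0) % p = 2 % p := hcong
  rwa [Nat.mod_eq_of_lt (by omega : 2 < p)] at this

lemma pf_not_dvd_K (h1 : ¬ (2 ^ e ≡ 1 [MOD p ^ 2])) {KK : ℕ}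
    (hK : g ^ KK ≡ 2 [MOD p ^ 2]) : ¬ p * f ∣ KK := by
  rintro ⟨k'', rfl⟩
  apply h1
  have hh : (2 : ℕ) ^ e ≡ (g ^ (p * f * k'')) ^ e [MOD p ^ 2] := (hK.pow e).symm
  have he : (g ^ (p * f * k'')) ^ e = (g ^ (p * (e * f))) ^ k'' := by
    rw [← pow_mul, ← pow_mul]
    congr 1
    ring
  rw [he] at hh
  have hone : (g ^ (p * (e * f))) ^ k'' ≡ 1 [MOD p ^ 2] := by
    calc (g ^ (p * (e * f))) ^ k'' ≡ 1 ^ k'' [MOD p ^ 2] := (g_pow_pef hp hef hg).pow k''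
      _ = 1 := one_pow _
  exact hh.trans hone

end KIdx

lemma exists_mul_modeq (K' n c : ℕ) (hn : 0 < n) (hd : Nat.gcd K' n ∣ c) :
    ∃ t, t * K' ≡ c [MOD n] := by
  obtain ⟨m, hm⟩ := hd
  set a : ℤ := Nat.gcdA K' n with ha
  have hbez : (Nat.gcd K' n : ℤ) = K' * a + n * Nat.gcdB K' n := Nat.gcd_eq_gcd_ab K' n
  have hn' : (n : ℤ) ≠ 0 := by exact_mod_cast hn.ne'
  set T : ℤ := a * m with hT
  refine ⟨(T % n).toNat, ?_⟩
  rw [Nat.modEq_iff_dvd]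
  push_cast [Int.toNat_of_nonneg (Int.emod_nonneg T hn')]
  -- goal : (n:ℤ) ∣ c - (T % n) * K'
  have h1 : (c : ℤ) = (K' * a + n * Nat.gcdB K' n) * m := by
    rw [← hbez]; exact_mod_cast congrArg (Nat.cast : ℕ → ℤ) hm
  have h2 : T % n = T - n * (T / n) := by rw [Int.emod_def]
  rw [h1, h2]
  refine ⟨Nat.gcdB K' n * m + (T / n) * K', ?_⟩
  rw [hT]
  ring

lemma gcd_f_dvd_half {KK r : ℕ} (hr : 1 ≤ r) (hfr : f = 2 ^ r) (hKf : ¬ f ∣ KK) :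
    Nat.gcd KK f ∣ f / 2 := by
  have hd : Nat.gcd KK f ∣ f := Nat.gcd_dvd_right _ _
  rw [hfr] at hd
  obtain ⟨i, hi, hdi⟩ := (Nat.dvd_prime_pow Nat.prime_two).mp hd
  have hir : i < r := by
    rcases Nat.lt_or_ge i r with h | h
    · exact h
    · exfalso
      have : i = r := le_antisymm hi h
      subst this
      apply hKf
      rw [hfr, ← hdi]
      exact Nat.gcd_dvd_left _ _
  have hhalf : f / 2 = 2 ^ (r - 1) := by
    rcases Nat.exists_eq_add_of_le hr with ⟨s, hs⟩
    have hr1 : 1 + s - 1 = s := by omega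
    rw [hfr, hs, hr1, Nat.add_comm 1 s, pow_succ, Nat.mul_div_cancel _ (by norm_num)]
  have hgf : Nat.gcd KK f = 2 ^ i := by rw [hfr]; exact hdi
  rw [hhalf, hgf]
  exact pow_dvd_pow 2 (by omega)

lemma gcd_pf_dvd_half {KK r : ℕ} (hr : 1 ≤ r) (hfr : f = 2 ^ r) (hKf : ¬ f ∣ KK)
    (hf2 : 2 ∣ f) :
    Nat.gcd KK (p * f) ∣ p * f / 2 := by
  have h1 : Nat.gcd KK (p * f) ∣ Nat.gcd KK p * Nat.gcd KK f :=
    Nat.gcd_mul_right_dvd_mul_gcd KK p f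
  have h2 : Nat.gcd KK p * Nat.gcd KK f ∣ p * (f / 2) :=
    mul_dvd_mul (Nat.gcd_dvd_right _ _) (gcd_f_dvd_half hr hfr hKf)
  have h3 : p * f / 2 = p * (f / 2) := by
    obtain ⟨u, hu⟩ := hf2
    subst hu
    rw [show p * (2 * u) = 2 * (p * u) by ring, Nat.mul_div_cancel_left _ (by norm_num),
      show 2 * u / 2 = u by omega]
  rw [h3]
  exact h1.trans h2

/-- Iterated Frobenius vanishing. -/
lemma iter_sq_zero {K : Type*} [Field K] (V : ℕ → K) (KK : ℕ)
    (hsq : ∀ m, (V m) ^ 2 = V (m + KK)) {m0 : ℕ} (h0 : V m0 = 0) (t : ℕ) :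
    V (m0 + t * KK) = 0 := by
  induction t with
  | zero => simpa using h0
  | succ t ih =>
    have : m0 + (t + 1) * KK = (m0 + t * KK) + KK := by ring
    rw [this, ← hsq, ih]
    ring

end S17



namespace S17

variable {K : Type*} [Field K] {p e f g : ℕ}

section Decomp
variable (hp : Nat.Prime p) (hef : p - 1 = e * f) (hf0 : 0 < f)
  (hg : orderOf (g : ZMod (p ^ 2)) = p * (p - 1))
include hp hef hf0 hg

lemma Dp_elt_lt {j x : ℕ} (hx : x ∈ Dp p e f g j) : x < p := by
  rw [Dp, Finset.mem_image] at hx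
  obtain ⟨t, _, rfl⟩ := hx
  exact Nat.mod_lt _ hp.pos

lemma Dp_inj {j : ℕ} : ∀ x ∈ range e, ∀ y ∈ range e,
    g ^ (f * x + j) % p = g ^ (f * y + j) % p → x = y := by
  intro x hx y hy hxy
  rw [mem_range] at hx hy
  have h1 : g ^ (f * x + j) ≡ g ^ (f * y + j) [MOD p] := hxy
  have h2 : f * x + j ≡ f * y + j [MOD e * f] := (pow_modeq_inj1 hp hef hg).mp h1
  have h3 : f * x ≡ f * y [MOD f * e] := by
    rw [mul_comm e f] at h2
    exact h2.add_right_cancel' j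
  have h4 : x ≡ y [MOD e] := Nat.ModEq.mul_left_cancel' (by omega) h3
  unfold Nat.ModEq at h4
  rwa [Nat.mod_eq_of_lt hx, Nat.mod_eq_of_lt hy] at h4

lemma Dp2_inj {j : ℕ} : ∀ x ∈ range e, ∀ y ∈ range e,
    g ^ (p * f * x + j) % p ^ 2 = g ^ (p * f * y + j) % p ^ 2 → x = y := by
  intro x hx y hy hxy
  rw [mem_range] at hx hy
  have h1 : g ^ (p * f * x + j) ≡ g ^ (p * f * y + j) [MOD p ^ 2] := hxy
  have h2 : p * f * x + j ≡ p * f * y + j [MOD p * (e * f)] := (pow_modeq_inj2 hp hef hg).mp h1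
  have h3 : (p * f) * x ≡ (p * f) * y [MOD (p * f) * e] := by
    have hm : p * (e * f) = (p * f) * e := by ring
    rw [← hm]
    exact h2.add_right_cancel' j
  have h4 : x ≡ y [MOD e] := Nat.ModEq.mul_left_cancel'
    (by have := hp.pos; positivity) h3
  unfold Nat.ModEq at h4
  rwa [Nat.mod_eq_of_lt hx, Nat.mod_eq_of_lt hy] at h4

lemma Dp_sum (F : ℕ → K) (j : ℕ) :
    ∑ x ∈ Dp p e f g j, F x = ∑ t ∈ range e, F (g ^ (f * t + j) % p) := by
  rw [Dp]
  exact Finset.sum_image (Dp_inj hp hef hf0 hg)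

lemma Dp2_sum (F : ℕ → K) (j : ℕ) :
    ∑ x ∈ Dp2 p e f g j, F x = ∑ t ∈ range e, F (g ^ (p * f * t + j) % p ^ 2) := by
  rw [Dp2]
  exact Finset.sum_image (Dp2_inj hp hef hf0 hg)

lemma pDp_sum (F : ℕ → K) (j : ℕ) :
    ∑ x ∈ pDp p e f g j, F x = ∑ t ∈ range e, F (p * (g ^ (f * t + j) % p)) := by
  rw [pDp]
  have hmul : ∀ x ∈ Dp p e f g j, ∀ y ∈ Dp p e f g j, p * x % p ^ 2 = p * y % p ^ 2 → x = y := by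
    intro x hx y hy hxy
    have hxp := Dp_elt_lt hp hef hf0 hg hx
    have hyp := Dp_elt_lt hp hef hf0 hg hy
    have hx2 : p * x < p ^ 2 := by rw [sq]; exact (Nat.mul_lt_mul_left hp.pos).mpr hxp
    have hy2 : p * y < p ^ 2 := by rw [sq]; exact (Nat.mul_lt_mul_left hp.pos).mpr hyp
    rw [Nat.mod_eq_of_lt hx2, Nat.mod_eq_of_lt hy2] at hxy
    exact Nat.eq_of_mul_eq_mul_left hp.pos hxy
  rw [Finset.sum_image hmul, Dp_sum hp hef hf0 hg]
  apply Finset.sum_congr rfl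
  intro t _
  congr 1
  apply Nat.mod_eq_of_lt
  rw [sq]
  exact (Nat.mul_lt_mul_left hp.pos).mpr (Nat.mod_lt _ hp.pos)

lemma Dp_disj {j1 j2 : ℕ} (hj1 : j1 < f) (hj2 : j2 < f) (hne : j1 ≠ j2) :
    Disjoint (Dp p e f g j1) (Dp p e f g j2) := by
  rw [Finset.disjoint_left]
  intro x hx1 hx2
  rw [Dp, Finset.mem_image] at hx1 hx2
  obtain ⟨t1, _, h1⟩ := hx1
  obtain ⟨t2, _, h2⟩ := hx2
  apply hne
  have hc : g ^ (f * t1 + j1) ≡ g ^ (f * t2 + j2) [MOD p] := h1.trans h2.symm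
  have h2' : f * t1 + j1 ≡ f * t2 + j2 [MOD e * f] := (pow_modeq_inj1 hp hef hg).mp hc
  have h3 : f * t1 + j1 ≡ f * t2 + j2 [MOD f] := h2'.of_dvd (dvd_mul_left f e)
  have h4 : j1 ≡ j2 [MOD f] := by
    have ht1 : f * t1 + j1 ≡ 0 + j1 [MOD f] :=
      Nat.ModEq.add_right _ ((Nat.modEq_zero_iff_dvd).mpr (dvd_mul_right f t1))
    have ht2 : f * t2 + j2 ≡ 0 + j2 [MOD f] :=
      Nat.ModEq.add_right _ ((Nat.modEq_zero_iff_dvd).mpr (dvd_mul_right f t2))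
    calc j1 = 0 + j1 := by omega
      _ ≡ f * t1 + j1 [MOD f] := ht1.symm
      _ ≡ f * t2 + j2 [MOD f] := h3
      _ ≡ 0 + j2 [MOD f] := ht2
      _ = j2 := by omega
  unfold Nat.ModEq at h4
  rwa [Nat.mod_eq_of_lt hj1, Nat.mod_eq_of_lt hj2] at h4


lemma Dp2_disj {j1 j2 : ℕ} (hj1 : j1 < p * f) (hj2 : j2 < p * f) (hne : j1 ≠ j2) :
    Disjoint (Dp2 p e f g j1) (Dp2 p e f g j2) := by
  rw [Finset.disjoint_left]
  intro x hx1 hx2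
  rw [Dp2, Finset.mem_image] at hx1 hx2
  obtain ⟨t1, _, h1⟩ := hx1
  obtain ⟨t2, _, h2⟩ := hx2
  apply hne
  have hc : g ^ (p * f * t1 + j1) ≡ g ^ (p * f * t2 + j2) [MOD p ^ 2] := h1.trans h2.symm
  have h2' : p * f * t1 + j1 ≡ p * f * t2 + j2 [MOD p * (e * f)] :=
    (pow_modeq_inj2 hp hef hg).mp hc
  have h3 : p * f * t1 + j1 ≡ p * f * t2 + j2 [MOD p * f] :=
    h2'.of_dvd ⟨e, by ring⟩
  have h4 : j1 ≡ j2 [MOD p * f] := by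
    have ht1 : p * f * t1 + j1 ≡ 0 + j1 [MOD p * f] :=
      Nat.ModEq.add_right _ ((Nat.modEq_zero_iff_dvd).mpr (dvd_mul_right _ t1))
    have ht2 : p * f * t2 + j2 ≡ 0 + j2 [MOD p * f] :=
      Nat.ModEq.add_right _ ((Nat.modEq_zero_iff_dvd).mpr (dvd_mul_right _ t2))
    calc j1 = 0 + j1 := by omega
      _ ≡ p * f * t1 + j1 [MOD p * f] := ht1.symm
      _ ≡ p * f * t2 + j2 [MOD p * f] := h3
      _ ≡ 0 + j2 [MOD p * f] := ht2
      _ = j2 := by omega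
  unfold Nat.ModEq at h4
  rwa [Nat.mod_eq_of_lt hj1, Nat.mod_eq_of_lt hj2] at h4

lemma pDp_disj {j1 j2 : ℕ} (hj1 : j1 < f) (hj2 : j2 < f) (hne : j1 ≠ j2) :
    Disjoint (pDp p e f g j1) (pDp p e f g j2) := by
  rw [Finset.disjoint_left]
  intro x hx1 hx2
  rw [pDp, Finset.mem_image] at hx1 hx2
  obtain ⟨y1, hy1, h1⟩ := hx1
  obtain ⟨y2, hy2, h2⟩ := hx2
  have hy1p := Dp_elt_lt hp hef hf0 hg hy1
  have hy2p := Dp_elt_lt hp hef hf0 hg hy2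
  have h1' : p * y1 % p ^ 2 = p * y1 :=
    Nat.mod_eq_of_lt (by rw [sq]; exact (Nat.mul_lt_mul_left hp.pos).mpr hy1p)
  have h2' : p * y2 % p ^ 2 = p * y2 :=
    Nat.mod_eq_of_lt (by rw [sq]; exact (Nat.mul_lt_mul_left hp.pos).mpr hy2p)
  have : y1 = y2 := by
    apply Nat.eq_of_mul_eq_mul_left hp.pos
    rw [← h1', ← h2', h1, h2]
  subst this
  exact (Finset.disjoint_left.mp (Dp_disj hp hef hf0 hg hj1 hj2 hne)) hy1 hy2

lemma Hp_sum (F : ℕ → K) (b : ℕ) :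
    ∑ x ∈ Hp p e f g b, F x
      = ∑ i ∈ range (f / 2), ∑ t ∈ range e, F (p * (g ^ (f * t + (i + b) % f) % p)) := by
  rw [Hp, Finset.sum_biUnion]
  · exact Finset.sum_congr rfl fun i _ => pDp_sum hp hef hf0 hg F _
  · intro i1 hi1 i2 hi2 hne
    simp only [Finset.mem_coe, Finset.mem_range] at hi1 hi2
    apply pDp_disj hp hef hf0 hg (Nat.mod_lt _ hf0) (Nat.mod_lt _ hf0)
    intro heq
    apply hne
    have h1 : i1 + b ≡ i2 + b [MOD f] := by
      unfold Nat.ModEq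
      simpa using heq
    have h2 : i1 ≡ i2 [MOD f] := h1.add_right_cancel' b
    unfold Nat.ModEq at h2
    have hl1 : i1 < f := lt_of_lt_of_le hi1 (Nat.div_le_self f 2)
    have hl2 : i2 < f := lt_of_lt_of_le hi2 (Nat.div_le_self f 2)
    rwa [Nat.mod_eq_of_lt hl1, Nat.mod_eq_of_lt hl2] at h2

lemma Hp2_sum (F : ℕ → K) (b : ℕ) :
    ∑ x ∈ Hp2 p e f g b, F x
      = ∑ i ∈ range (p * f / 2), ∑ t ∈ range e,
          F (g ^ (p * f * t + (i + b) % (p * f)) % p ^ 2) := by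
  have hpf0 : 0 < p * f := by have := hp.pos; positivity
  rw [Hp2, Finset.sum_biUnion]
  · exact Finset.sum_congr rfl fun i _ => Dp2_sum hp hef hf0 hg F _
  · intro i1 hi1 i2 hi2 hne
    simp only [Finset.mem_coe, Finset.mem_range] at hi1 hi2
    apply Dp2_disj hp hef hf0 hg (Nat.mod_lt _ hpf0) (Nat.mod_lt _ hpf0)
    intro heq
    apply hne
    have h1 : i1 + b ≡ i2 + b [MOD p * f] := by
      unfold Nat.ModEq
      simpa using heq
    have h2 : i1 ≡ i2 [MOD p * f] := h1.add_right_cancel' b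
    unfold Nat.ModEq at h2
    have hl1 : i1 < p * f := lt_of_lt_of_le hi1 (Nat.div_le_self _ 2)
    have hl2 : i2 < p * f := lt_of_lt_of_le hi2 (Nat.div_le_self _ 2)
    rwa [Nat.mod_eq_of_lt hl1, Nat.mod_eq_of_lt hl2] at h2

lemma mem_Hp_dvd {x b : ℕ} (hx : x ∈ Hp p e f g b) : p ∣ x ∧ x ≠ 0 := by
  rw [Hp, Finset.mem_biUnion] at hx
  obtain ⟨i, _, hx⟩ := hx
  rw [pDp, Finset.mem_image] at hx
  obtain ⟨y, hy, rfl⟩ := hx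
  have hyp := Dp_elt_lt hp hef hf0 hg hy
  have hy0 : y ≠ 0 := by
    rw [Dp, Finset.mem_image] at hy
    obtain ⟨t, _, rfl⟩ := hy
    exact gpow_mod_p_ne_zero hp hg _
  have hmod : p * y % p ^ 2 = p * y :=
    Nat.mod_eq_of_lt (by rw [sq]; exact (Nat.mul_lt_mul_left hp.pos).mpr hyp)
  rw [hmod]
  exact ⟨dvd_mul_right p y, Nat.mul_ne_zero hp.pos.ne' hy0⟩

lemma mem_Hp2_not_dvd {x b : ℕ} (hx : x ∈ Hp2 p e f g b) : ¬ p ∣ x := by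
  rw [Hp2, Finset.mem_biUnion] at hx
  obtain ⟨i, _, hx⟩ := hx
  rw [Dp2, Finset.mem_image] at hx
  obtain ⟨t, _, rfl⟩ := hx
  exact not_dvd_gpow_mod_sq hp hg _

lemma C1_sum (F : ℕ → K) (b : ℕ) :
    ∑ x ∈ C1 p e f g b, F x
      = (∑ x ∈ Hp p e f g b, F x) + (∑ x ∈ Hp2 p e f g b, F x) + F 0 := by
  rw [C1]
  have hd1 : Disjoint (Hp p e f g b) (Hp2 p e f g b) := by
    rw [Finset.disjoint_left]
    intro x hx1 hx2
    exact mem_Hp2_not_dvd hp hef hf0 hg hx2 (mem_Hp_dvd hp hef hf0 hg hx1).1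
  have hd2 : Disjoint (Hp p e f g b ∪ Hp2 p e f g b) ({0} : Finset ℕ) := by
    rw [Finset.disjoint_left]
    intro x hx1 hx2
    rw [Finset.mem_singleton] at hx2
    subst hx2
    rcases Finset.mem_union.mp hx1 with h | h
    · exact (mem_Hp_dvd hp hef hf0 hg h).2 rfl
    · exact mem_Hp2_not_dvd hp hef hf0 hg h (dvd_zero p)
  rw [Finset.sum_union hd2, Finset.sum_union hd1, Finset.sum_singleton]

end Decomp

end S17

namespace S17

variable {K : Type*} [Field K] {p e f g : ℕ}

section Eval
variable [CharP K 2]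
variable (hp : Nat.Prime p) (hodd : Odd p) (hef : p - 1 = e * f) (hf0 : 0 < f)
  (hf2 : 2 ∣ f) (hg : orderOf (g : ZMod (p ^ 2)) = p * (p - 1))
include hp hef hg

lemma eta_periodic {w : K} (hw : w ^ p = 1) {c1 c2 : ℕ} (hc : c1 ≡ c2 [MOD f]) :
    eta e f g w c1 = eta e f g w c2 := by
  unfold eta
  exact Finset.sum_congr rfl fun i _ => T1_periodic hp hef hg hw (hc.add_left i)

lemma theta_periodic {z : K} (hz : z ^ p ^ 2 = 1) {c1 c2 : ℕ} (hc : c1 ≡ c2 [MOD p * f]) :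
    theta p e f g z c1 = theta p e f g z c2 := by
  unfold theta
  exact Finset.sum_congr rfl fun i _ => T2_periodic hp hef hg hz (hc.add_left i)

omit hp hef hg in
lemma even_cast_zero {n : ℕ} (hn : 2 ∣ n) : (n : K) = 0 := by
  obtain ⟨m, rfl⟩ := hn
  push_cast
  rw [CharTwo.two_eq_zero, zero_mul]

include hf0 hodd hf2

/-- evaluation at z = 1 -/
lemma SC_one (b : ℕ) : ∑ x ∈ C1 p e f g b, (1 : K) ^ x = 1 := by
  rw [C1_sum hp hef hf0 hg, Hp_sum hp hef hf0 hg, Hp2_sum hp hef hf0 hg]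
  simp only [one_pow]
  rw [Finset.sum_const, Finset.sum_const]
  simp only [Finset.sum_const, Finset.card_range, smul_eq_mul, mul_one]
  have h1 : ((f / 2 * e : ℕ) : K) + ((p * f / 2 * e : ℕ) : K) = 0 := by
    rw [← Nat.cast_add]
    apply even_cast_zero
    obtain ⟨u, hu⟩ := hf2
    have hpf : p * f / 2 = p * u := by
      subst hu
      rw [show p * (2 * u) = 2 * (p * u) by ring, Nat.mul_div_cancel_left _ (by norm_num)]
    have hf2' : f / 2 = u := by omega
    rw [hpf, hf2']
    have : u * e + p * u * e = (1 + p) * (u * e) := by ring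
    rw [this]
    apply Dvd.dvd.mul_right
    obtain ⟨c, hc⟩ := hodd
    exact ⟨c + 1, by omega⟩
  push_cast at h1 ⊢
  linear_combination h1

/-- the Hp2 inner sums collapse to T1 values when z^p = 1 -/
lemma Hp2_inner_T1 {z : K} (hzp : z ^ p = 1) (b i : ℕ) :
    ∑ t ∈ range e, z ^ (g ^ (p * f * t + (i + b) % (p * f)) % p ^ 2)
      = T1 e f g z (i + b) := by
  have hz2 : z ^ p ^ 2 = 1 := by rw [sq, pow_mul, hzp, one_pow]
  have hp1 : p = e * f + 1 := (Nat.sub_eq_iff_eq_add hp.one_lt.le).mp hef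
  have step1 : ∑ t ∈ range e, z ^ (g ^ (p * f * t + (i + b) % (p * f)) % p ^ 2)
      = T1 e f g z ((i + b) % (p * f)) := by
    unfold T1
    apply Finset.sum_congr rfl
    intro t _
    rw [← pow_eq_pow_mod _ hz2]
    apply T1_term hp hef hg hzp
    have key : p * f * t = f * t + (e * f) * (f * t) := by rw [hp1]; ring
    calc p * f * t + (i + b) % (p * f)
        = (f * t + (i + b) % (p * f)) + (e * f) * (f * t) := by rw [key]; ring
      _ ≡ (f * t + (i + b) % (p * f)) + 0 [MOD e * f] :=
          Nat.ModEq.add_left _ ((Nat.modEq_zero_iff_dvd).mpr (dvd_mul_right _ _))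
      _ = f * t + (i + b) % (p * f) := by omega
  rw [step1]
  apply T1_periodic hp hef hg hzp
  exact (Nat.mod_modEq _ _).of_dvd ⟨p, mul_comm p f⟩

/-- sum of T1 over a half-period -/
lemma sum_T1_half {z : K} (hz1 : z ≠ 1) (hzp : z ^ p = 1) (b : ℕ) :
    ∑ i ∈ range (p * f / 2), T1 e f g z (i + b)
      = ((e * (f / 2) : ℕ) : K) + eta e f g z b := by
  obtain ⟨u, hu⟩ := hf2
  have hp1 : p = e * f + 1 := (Nat.sub_eq_iff_eq_add hp.one_lt.le).mp hef
  have hu2 : f / 2 = u := by omega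
  have hsplit : p * f / 2 = f * (e * u) + u := by
    have h1 : p * f / 2 = p * u := by
      rw [hu, show p * (2 * u) = 2 * (p * u) by ring,
        Nat.mul_div_cancel_left _ (by norm_num)]
    rw [h1, hp1, hu]
    ring
  rw [hsplit, sum_range_add']
  have hfirst : ∑ i ∈ range (f * (e * u)), T1 e f g z (i + b) = ((e * u : ℕ) : K) := by
    rw [mul_comm f (e * u), sum_blocks (fun i => T1 e f g z (i + b)) (e * u) f]
    have hin : ∀ t ∈ range (e * u), ∑ j ∈ range f, T1 e f g z (f * t + j + b) = 1 := by
      intro t _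
      rw [show (fun j => T1 e f g z (f * t + j + b)) = fun j => T1 e f g z (j + (f * t + b))
        from funext fun j => by congr 1; omega]
      exact T1_window hp hef hg hz1 hzp (f * t + b)
    rw [Finset.sum_congr rfl hin, Finset.sum_const, Finset.card_range]
    simp
  have hsecond : ∑ j ∈ range u, T1 e f g z (f * (e * u) + j + b) = eta e f g z b := by
    unfold eta
    rw [hu2]
    apply Finset.sum_congr rfl
    intro j _
    apply T1_periodic hp hef hg hzp
    calc f * (e * u) + j + b = (j + b) + f * (e * u) := by ring
      _ ≡ (j + b) + 0 [MOD f] :=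
          Nat.ModEq.add_left _ ((Nat.modEq_zero_iff_dvd).mpr (dvd_mul_right _ _))
      _ = j + b := by omega
  rw [hfirst, hsecond, hu2]

/-- evaluation at z of order p -/
lemma SC_p {z : K} (hz1 : z ≠ 1) (hzp : z ^ p = 1) (b : ℕ) :
    ∑ x ∈ C1 p e f g b, z ^ x = 1 + eta e f g z b := by
  rw [C1_sum hp hef hf0 hg, Hp_sum hp hef hf0 hg, Hp2_sum hp hef hf0 hg]
  have hHp : ∑ i ∈ range (f / 2), ∑ t ∈ range e,
      z ^ (p * (g ^ (f * t + (i + b) % f) % p)) = ((e * (f / 2) : ℕ) : K) := by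
    have h1 : ∀ i ∈ range (f / 2), ∑ t ∈ range e,
        z ^ (p * (g ^ (f * t + (i + b) % f) % p)) = ((e : ℕ) : K) := by
      intro i _
      have : ∀ t ∈ range e, z ^ (p * (g ^ (f * t + (i + b) % f) % p)) = 1 := by
        intro t _
        rw [pow_mul, hzp, one_pow]
      rw [Finset.sum_congr rfl this, Finset.sum_const, Finset.card_range]
      simp
    rw [Finset.sum_congr rfl h1, Finset.sum_const, Finset.card_range]
    push_cast
    ring
  have hHp2 : ∑ i ∈ range (p * f / 2), ∑ t ∈ range e,
      z ^ (g ^ (p * f * t + (i + b) % (p * f)) % p ^ 2)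
      = ((e * (f / 2) : ℕ) : K) + eta e f g z b := by
    rw [Finset.sum_congr rfl fun i _ => Hp2_inner_T1 hp hodd hef hf0 hf2 hg hzp b i]
    exact sum_T1_half hp hodd hef hf0 hf2 hg hz1 hzp b
  rw [hHp, hHp2, pow_zero]
  have hcc : ((e * (f / 2) : ℕ) : K) + ((e * (f / 2) : ℕ) : K) = 0 :=
    CharTwo.add_self_eq_zero _
  linear_combination hcc

/-- evaluation at z of order p² -/
lemma SC_p2 {z : K} (hzp : z ^ p ≠ 1) (hz2 : z ^ p ^ 2 = 1) (b : ℕ) :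
    ∑ x ∈ C1 p e f g b, z ^ x = 1 + eta e f g (z ^ p) b + theta p e f g z b := by
  have hgamma : (z ^ p) ^ p = 1 := by rw [← pow_mul, ← sq]; exact hz2
  rw [C1_sum hp hef hf0 hg, Hp_sum hp hef hf0 hg, Hp2_sum hp hef hf0 hg]
  have hHp : ∑ i ∈ range (f / 2), ∑ t ∈ range e,
      z ^ (p * (g ^ (f * t + (i + b) % f) % p)) = eta e f g (z ^ p) b := by
    unfold eta
    apply Finset.sum_congr rfl
    intro i _
    have step1 : ∑ t ∈ range e, z ^ (p * (g ^ (f * t + (i + b) % f) % p))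
        = T1 e f g (z ^ p) ((i + b) % f) := by
      unfold T1
      apply Finset.sum_congr rfl
      intro t _
      rw [pow_mul, ← pow_eq_pow_mod _ hgamma]
    rw [step1]
    exact T1_periodic hp hef hg hgamma (Nat.mod_modEq _ _)
  have hHp2 : ∑ i ∈ range (p * f / 2), ∑ t ∈ range e,
      z ^ (g ^ (p * f * t + (i + b) % (p * f)) % p ^ 2) = theta p e f g z b := by
    unfold theta
    apply Finset.sum_congr rfl
    intro i _
    have step1 : ∑ t ∈ range e, z ^ (g ^ (p * f * t + (i + b) % (p * f)) % p ^ 2)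
        = T2 p e f g z ((i + b) % (p * f)) := by
      unfold T2
      apply Finset.sum_congr rfl
      intro t _
      rw [← pow_eq_pow_mod _ hz2]
    rw [step1]
    exact T2_periodic hp hef hg hz2 (Nat.mod_modEq _ _)
  rw [hHp, hHp2, pow_zero]
  ring

end Eval

end S17

namespace S17

variable {K : Type*} [Field K] {p e f g : ℕ}

theorem SC_ne_zero [CharP K 2] {r : ℕ} (hp : Nat.Prime p) (hodd : Odd p)
    (hr : 1 ≤ r) (hf : f = 2 ^ r) (hef : p - 1 = e * f)
    (hg : orderOf (g : ZMod (p ^ 2)) = p * (p - 1))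
    (h1 : ¬ (2 ^ e ≡ 1 [MOD p ^ 2])) (h2 : 2 ∉ Dp p e f g 0)
    (b : ℕ) (z : K) (hz : z ^ p ^ 2 = 1) :
    ∑ x ∈ C1 p e f g b, z ^ x ≠ 0 := by
  have hf0 : 0 < f := by rw [hf]; positivity
  have hf2 : 2 ∣ f := by
    rw [hf]
    exact dvd_pow_self 2 (by omega)
  have hfe : f = f / 2 + f / 2 := by omega
  have hpfe : p * f = p * f / 2 + p * f / 2 := by
    obtain ⟨u, hu⟩ := hf2
    subst hu
    rw [show p * (2 * u) = 2 * (p * u) by ring, Nat.mul_div_cancel_left _ (by norm_num)]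
    ring
  have h2K : (2 : K) = 0 := CharTwo.two_eq_zero
  obtain ⟨KK, hK⟩ := exists_pow_eq_two hp hef hg hodd
  have hKp : g ^ KK ≡ 2 [MOD p] := hK.of_dvd (dvd_pow_self p two_ne_zero)
  have hfK : ¬ f ∣ KK := f_not_dvd_K hp hef hg hodd h2 hKp
  intro hcontra
  by_cases hz1 : z = 1
  · subst hz1
    rw [SC_one hp hodd hef hf0 hf2 hg b] at hcontra
    exact one_ne_zero hcontra
  by_cases hzp : z ^ p = 1
  -- ===== order p case =====
  · rw [SC_p hp hodd hef hf0 hf2 hg hz1 hzp b] at hcontra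
    set V : ℕ → K := fun m => 1 + eta e f g z m with hV
    have hsq : ∀ m, (V m) ^ 2 = V (m + KK) := by
      intro m
      rw [hV]
      simp only []
      rw [CharTwo.add_sq, one_pow, eta_sq hp hef hg hzp hKp m]
    obtain ⟨t, ht⟩ := exists_mul_modeq KK f (f / 2) hf0 (gcd_f_dvd_half hr hf hfK)
    have h0 : V b = 0 := hcontra
    have hiter : V (b + t * KK) = 0 := iter_sq_zero V KK hsq h0 t
    have hper : eta e f g z (b + t * KK) = eta e f g z (b + f / 2) :=
      eta_periodic hp hef hg hzp (ht.add_left b)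
    have hwin : eta e f g z b + eta e f g z (b + f / 2) = 1 :=
      eta_window hp hef hg hfe hz1 hzp b
    have : V (b + t * KK) = 1 + eta e f g z (b + f / 2) := by rw [hV]; simp only []; rw [hper]
    rw [this] at hiter
    -- hcontra : 1 + η b = 0 ; hiter : 1 + η (b + f/2) = 0 ; hwin : η b + η (b+f/2) = 1
    have : (1 : K) = 0 := by linear_combination hcontra + hiter - hwin - h2K
    exact one_ne_zero this
  -- ===== order p² case =====
  · rw [SC_p2 hp hodd hef hf0 hf2 hg hzp hz b] at hcontra
    have hgamma1 : (z ^ p) ^ p = 1 := by rw [← pow_mul, ← sq]; exact hz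
    set V : ℕ → K := fun m => 1 + eta e f g (z ^ p) m + theta p e f g z m with hV
    have hsq : ∀ m, (V m) ^ 2 = V (m + KK) := by
      intro m
      rw [hV]
      simp only []
      rw [CharTwo.add_sq, CharTwo.add_sq, one_pow,
        eta_sq hp hef hg hgamma1 hKp m, theta_sq hp hef hg hz hK m]
    obtain ⟨t, ht⟩ := exists_mul_modeq KK (p * f) (p * f / 2)
      (by have := hp.pos; positivity) (gcd_pf_dvd_half hr hf hfK hf2)
    have h0 : V b = 0 := hcontra
    have hiter : V (b + t * KK) = 0 := iter_sq_zero V KK hsq h0 t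
    have hth : theta p e f g z (b + t * KK) = theta p e f g z b := by
      rw [theta_periodic hp hef hg hz (ht.add_left b)]
      exact theta_window hp hef hg hpfe hzp hz b
    have hpf2f : p * f / 2 ≡ f / 2 [MOD f] := by
      obtain ⟨u, hu⟩ := hf2
      have hu2 : f / 2 = u := by omega
      have h1' : p * f / 2 = p * u := by
        rw [hu, show p * (2 * u) = 2 * (p * u) by ring,
          Nat.mul_div_cancel_left _ (by norm_num)]
      have hp1 : p = e * f + 1 := (Nat.sub_eq_iff_eq_add hp.one_lt.le).mp hef
      rw [h1', hu2, hp1, hu]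
      calc (e * (2 * u) + 1) * u = u + (2 * u) * (e * u) := by ring
        _ ≡ u + 0 [MOD 2 * u] := Nat.ModEq.add_left _
            ((Nat.modEq_zero_iff_dvd).mpr (dvd_mul_right _ _))
        _ = u := by omega
    have heta : eta e f g (z ^ p) (b + t * KK) = eta e f g (z ^ p) (b + f / 2) := by
      apply eta_periodic hp hef hg hgamma1
      calc b + t * KK ≡ b + p * f / 2 [MOD f] :=
            (ht.add_left b).of_dvd ⟨p, mul_comm p f⟩
        _ ≡ b + f / 2 [MOD f] := hpf2f.add_left b
    have hwin : eta e f g (z ^ p) b + eta e f g (z ^ p) (b + f / 2) = 1 :=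
      eta_window hp hef hg hfe hzp hgamma1 b
    have hVt : 1 + eta e f g (z ^ p) (b + f / 2) + theta p e f g z b = 0 := by
      rw [← heta, ← hth]
      exact hiter
    have : (1 : K) = 0 := by
      linear_combination hcontra + hVt - hwin - (1 + theta p e f g z b) * h2K
    exact one_ne_zero this

end S17

namespace S17

lemma C1_subset (p e f g b : ℕ) (hp : 0 < p) : C1 p e f g b ⊆ range (p ^ 2) := by
  intro x hx
  have hp2 : 0 < p ^ 2 := by positivity
  rw [C1, Finset.mem_union, Finset.mem_union] at hx
  rcases hx with (h | h) | h
  · rw [Hp, Finset.mem_biUnion] at h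
    obtain ⟨i, _, h⟩ := h
    rw [pDp, Finset.mem_image] at h
    obtain ⟨y, _, rfl⟩ := h
    rw [mem_range]
    exact Nat.mod_lt _ hp2
  · rw [Hp2, Finset.mem_biUnion] at h
    obtain ⟨i, _, h⟩ := h
    rw [Dp2, Finset.mem_image] at h
    obtain ⟨t, _, rfl⟩ := h
    rw [mem_range]
    exact Nat.mod_lt _ hp2
  · rw [Finset.mem_singleton] at h
    subst h
    rw [mem_range]
    exact hp2

lemma eval_Spoly {K : Type*} [Field K] (φ : ZMod 2 →+* K) (p e f g b : ℕ) (hp : 0 < p)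
    (z : K) :
    Polynomial.eval z ((Spoly p e f g b).map φ) = ∑ x ∈ C1 p e f g b, z ^ x := by
  classical
  rw [Spoly, Polynomial.map_sum, Polynomial.eval_finset_sum]
  have h1 : ∀ i ∈ range (p ^ 2),
      Polynomial.eval z (((if i % p ^ 2 ∈ C1 p e f g b then
        (Polynomial.X : Polynomial (ZMod 2)) ^ i else 0)).map φ)
      = if i ∈ C1 p e f g b then z ^ i else 0 := by
    intro i hi
    rw [mem_range] at hi
    rw [Nat.mod_eq_of_lt hi]
    split_ifs with h
    · rw [Polynomial.map_pow, Polynomial.map_X, Polynomial.eval_pow, Polynomial.eval_X]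
    · rw [Polynomial.map_zero, Polynomial.eval_zero]
  rw [Finset.sum_congr rfl h1, Finset.sum_ite_mem]
  congr 1
  rw [Finset.inter_eq_right]
  exact C1_subset p e f g b hp

end S17


theorem stmt_17 (p e f r g b : ℕ) (hp : p.Prime) (hodd : Odd p)
    (hr : 1 ≤ r) (hf : f = 2 ^ r) (hef : p - 1 = e * f)
    (hg : orderOf (g : ZMod (p ^ 2)) = p * (p - 1))
    (hb : b < p * f)
    (h1 : ¬ (2 ^ e ≡ 1 [MOD p ^ 2])) (h2 : 2 ∉ Dp p e f g 0) :
    EuclideanDomain.gcd ((Polynomial.X : Polynomial (ZMod 2)) ^ p ^ 2 - 1)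
      (Spoly p e f g b) = 1 := by
  classical
  set K := AlgebraicClosure (ZMod 2) with hK
  haveI : CharP K 2 := charP_of_injective_algebraMap
    (algebraMap (ZMod 2) K).injective 2
  set A : Polynomial (ZMod 2) := (Polynomial.X : Polynomial (ZMod 2)) ^ p ^ 2 - 1 with hA
  set S : Polynomial (ZMod 2) := Spoly p e f g b with hS
  set G : Polynomial (ZMod 2) := EuclideanDomain.gcd A S with hG
  have hp2pos : 0 < p ^ 2 := by have := hp.pos; positivity
  have hAne : A ≠ 0 := by
    rw [hA, ← Polynomial.C_1]
    exact Polynomial.X_pow_sub_C_ne_zero hp2pos 1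
  have hGunit : IsUnit G := by
    by_contra hGu
    have hGne : G ≠ 0 := by
      intro h
      rw [hG] at h
      exact hAne (EuclideanDomain.gcd_eq_zero_iff.mp h).1
    have hdeg : G.degree ≠ 0 := fun h => hGu (Polynomial.isUnit_iff_degree_eq_zero.mpr h)
    set φ : ZMod 2 →+* K := algebraMap (ZMod 2) K with hφ
    have hdegm : (G.map φ).degree ≠ 0 := by
      rw [Polynomial.degree_map_eq_of_injective φ.injective]
      exact hdeg
    obtain ⟨z, hz⟩ := IsAlgClosed.exists_root (G.map φ) hdegm
    have hdvdA : G.map φ ∣ A.map φ := Polynomial.map_dvd φ (EuclideanDomain.gcd_dvd_left A S)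
    have hdvdS : G.map φ ∣ S.map φ := Polynomial.map_dvd φ (EuclideanDomain.gcd_dvd_right A S)
    have hrootA : Polynomial.eval z (A.map φ) = 0 := by
      obtain ⟨c, hc⟩ := hdvdA
      rw [hc, Polynomial.eval_mul, hz.eq_zero, zero_mul]
    have hrootS : Polynomial.eval z (S.map φ) = 0 := by
      obtain ⟨c, hc⟩ := hdvdS
      rw [hc, Polynomial.eval_mul, hz.eq_zero, zero_mul]
    have hzpow : z ^ p ^ 2 = 1 := by
      rw [hA] at hrootA
      simp only [Polynomial.map_sub, Polynomial.map_pow, Polynomial.map_X,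
        Polynomial.map_one, Polynomial.eval_sub, Polynomial.eval_pow,
        Polynomial.eval_X, Polynomial.eval_one, sub_eq_zero] at hrootA
      exact hrootA
    have hsum : ∑ x ∈ C1 p e f g b, z ^ x = 0 := by
      rw [← S17.eval_Spoly φ p e f g b hp.pos z]
      exact hrootS
    exact S17.SC_ne_zero hp hodd hr hf hef hg h1 h2 b z hzpow hsum
  obtain ⟨u, hu, hCu⟩ := Polynomial.isUnit_iff.mp hGunit
  have hu1 : u = 1 := by
    have : ∀ v : ZMod 2, IsUnit v → v = 1 := by decide
    exact this u hu
  rw [hG] at hCu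
  show EuclideanDomain.gcd A S = 1
  rw [← hCu, hu1, Polynomial.C_1]
end
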